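/- arXiv:1310.4764 — 2 statements merged into one kernel-verified Lean document; each statement's English description precedes it below -/
import Mathlib

section
/- Dimension-reduction step: Let d ≥ 2, 3 ≤ j ≤ d, ε ∈ (0, 4/15), let L_0 divide L_s, G_0 = L_0·Z^d, fix x ∈ L_s·Z^d, y ∈ G_0 ∩ (x+[−L_s,2L_s)^d), pairwise orthogonal e_1,…,e_j ∈ Z^d with |e_i|₁ = 1, and a set G ⊆ G_0 ∩ (x+[−L_s,2L_s)^d). Write g' = G ∩ (y + Σ_{i=1}^j Z·e_i). Assume: (i) every (j−1)-dimensional slice M_k = (k·L_0·e_1 + (y + Σ_{i=2}^j Z·e_i)) ∩ (x+[−L_s,2L_s)^d) ∩ G_0 which is non-empty contains at least (1 − ε/2)·(3L_s/L_0)^{j−1} points of G; (ii) there is γ_{j−1} > 0 such that for every such slice M_k, every subset a of G ∩ M_k with |a| ∈ [ (ε/8)(3L_s/L_0)^{j−1} , (1 − ε/8)(3L_s/L_0)^{j−1} ] has boundary within G ∩ M_k of size at least γ_{j−1}·(3L_s/L_0)^{j−2}; (iii) there is γ_2 > 0 such that for every 2-dimensional slice N_t = (Σ_{i=3}^j t_i·L_0·e_i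 + (y + Z·e_1 + Z·e_2)) ∩ (x+[−L_s,2L_s)^d) ∩ G_0 (t ∈ Z^{j−2}), every subset a of G ∩ N_t with |a| ∈ [ (ε/16)(3L_s/L_0)^2 , (1 − ε/16)(3L_s/L_0)^2 ] has boundary within G ∩ N_t of size at least γ_2·(3L_s/L_0). Then for every a' ⊆ g' with |a'| ∈ [ ε(3L_s/L_0)^j , (1−ε)(3L_s/L_0)^j ], the boundary of a' within g' has at least min( (ε/8)·γ_{j−1} , (1/3)·γ_2 )·(3L_s/L_0)^{j−1} elements. -/
open MeasureTheory Filter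
open scoped ENNReal

namespace Perco

/-- A point of the lattice `ℤ^d`. -/
abbrev Pt (d : ℕ) := Fin d → ℤ

/-- A percolation configuration on `ℤ^d`. -/
abbrev Config (d : ℕ) := Pt d → Bool

variable {d : ℕ}

/-- The `ℓ¹`-distance on `ℤ^d`. -/
def dist1 (x y : Pt d) : ℕ := ∑ i, (x i - y i).natAbs

/-- The `ℓ^∞`-distance on `ℤ^d`. -/
def distInf (x y : Pt d) : ℕ := Finset.univ.sup fun i => (x i - y i).natAbs

/-- The closed `ℓ^∞`-ball of radius `R` around `x`. -/
def ballZ (x : Pt d) (R : ℕ) : Set (Pt d) := {y | distInf x y ≤ R}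

/-- Nearest-neighbour adjacency in `ℤ^d`. -/
def adj (x y : Pt d) : Prop := dist1 x y = 1

/-- The occupied set of a configuration. -/
def SS (ω : Config d) : Set (Pt d) := {x | ω x = true}

/-- One step of a nearest-neighbour path staying inside `T`. -/
def stepRel (T : Set (Pt d)) (x y : Pt d) : Prop := adj x y ∧ x ∈ T ∧ y ∈ T

/-- `x` and `y` are connected by a nearest-neighbour path inside `T`. -/
def connIn (T : Set (Pt d)) (x y : Pt d) : Prop :=
  x ∈ T ∧ y ∈ T ∧ Relation.ReflTransGen (stepRel T) x y

/-- The connected component (cluster) of `x` in `T`. -/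
def cluster (T : Set (Pt d)) (x : Pt d) : Set (Pt d) := {y | connIn T x y}

/-- `S_r`: vertices of `S(ω)` in connected components of `ℓ¹`-diameter at least `r`. -/
def Sr (ω : Config d) (r : ℝ) : Set (Pt d) :=
  {x | x ∈ SS ω ∧ ∃ y ∈ cluster (SS ω) x, ∃ z ∈ cluster (SS ω) x, r ≤ (dist1 y z : ℝ)}

/-- `S_∞`: vertices of `S(ω)` in infinite connected components. -/
def Sinf (ω : Config d) : Set (Pt d) := {x | x ∈ SS ω ∧ (cluster (SS ω) x).Infinite}

/-- The shift of a configuration by `x`. -/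
def shift (x : Pt d) (ω : Config d) : Config d := fun y => ω (x + y)

/-- An increasing event. -/
def IncreasingEvent (G : Set (Config d)) : Prop :=
  ∀ ω ω' : Config d, (∀ x, ω x = true → ω' x = true) → ω ∈ G → ω' ∈ G

/-- A decreasing event. -/
def DecreasingEvent (G : Set (Config d)) : Prop :=
  ∀ ω ω' : Config d, (∀ x, ω' x = true → ω x = true) → ω ∈ G → ω' ∈ G

/-- The event `G` depends only on the coordinates in `B`. -/
def DependsOn (G : Set (Config d)) (B : Set (Pt d)) : Prop :=
  ∀ ω ω' : Config d, (∀ x ∈ B, ω x = ω' x) → (ω ∈ G ↔ ω' ∈ G)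

/-- The edge boundary of `A` in `Sset`: (directed representatives of) edges of `ℤ^d`
with one endpoint in `A` and the other in `Sset \ A`. -/
def edgeBd (Sset A : Set (Pt d)) : Set (Pt d × Pt d) :=
  {p | adj p.1 p.2 ∧ p.1 ∈ A ∧ p.2 ∈ Sset \ A}

/-- The density `η(u) = P[0 ∈ S_∞]` of the infinite cluster. -/
noncomputable def eta (d : ℕ) (P : Measure (Config d)) : ℝ :=
  (P {ω | (0 : Pt d) ∈ Sinf ω}).toReal

/-- The first local-uniqueness event of axiom S1. -/
def locUniq1 (d : ℕ) (R : ℕ) : Set (Config d) :=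
  {ω | (Sr ω R ∩ ballZ (0 : Pt d) R).Nonempty}

/-- The second local-uniqueness event of axiom S1. -/
def locUniq2 (d : ℕ) (R : ℕ) : Set (Config d) :=
  {ω | ∀ x ∈ Sr ω ((R : ℝ)/10) ∩ ballZ (0 : Pt d) R,
       ∀ y ∈ Sr ω ((R : ℝ)/10) ∩ ballZ (0 : Pt d) R,
       connIn (SS ω ∩ ballZ (0 : Pt d) (2*R)) x y}


/-! ### Renormalization scales and good/bad boxes -/

/-- The scales `l_k = l_0·4^{k^{θ_sc}}`. -/
def lSc (l0 θsc k : ℕ) : ℕ := l0 * 4 ^ (k ^ θsc)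

/-- The scales `r_k = r_0·2^{k^{θ_sc}}`. -/
def rSc (r0 θsc k : ℕ) : ℕ := r0 * 2 ^ (k ^ θsc)

/-- The scales `L_0 = L_0`, `L_{k+1} = l_k·L_k`. -/
def LSc (l0 L0 θsc : ℕ) : ℕ → ℕ
  | 0 => L0
  | k+1 => lSc l0 θsc k * LSc l0 L0 θsc k

/-- The renormalized lattice `G = L·ℤ^d`. -/
def lattice (d L : ℕ) : Set (Pt d) := {x | ∀ i, (L : ℤ) ∣ x i}

/-- The box `x + [0,n)^d`. -/
def box (x : Pt d) (n : ℕ) : Set (Pt d) := {y | ∀ i, x i ≤ y i ∧ y i < x i + n}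

/-- The box `x + [lo,hi)^d`. -/
def boxI (x : Pt d) (lo hi : ℤ) : Set (Pt d) := {y | ∀ i, x i + lo ≤ y i ∧ y i < x i + hi}

/-- The corner `x + e·L_0` of the sub-box indexed by `e ∈ {0,1}^d`. -/
def subCorner (x : Pt d) (L0 : ℕ) (e : Fin d → Bool) : Pt d :=
  fun i => x i + (if e i then (L0 : ℤ) else 0)

/-- `C` is a connected component of `S_{L0} ∩ B` of cardinality at least `(3/4)·η·L_0^d`. -/
def bigCompIn (ω : Config d) (η : ℝ) (L0 : ℕ) (B : Set (Pt d)) (C : Set (Pt d)) : Prop :=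
  (∃ w ∈ Sr ω (L0 : ℝ) ∩ B, C = cluster (Sr ω (L0 : ℝ) ∩ B) w) ∧
  (3/4 : ℝ) * η * (L0 : ℝ) ^ d ≤ C.ncard

/-- The event `A^u_x`: each of the `2^d` sub-boxes of side `L_0` of `x + [0,2L_0)^d` contains a
connected component of `S_{L_0}` with at least `(3/4)·η·L_0^d` vertices, and all these components
are connected in `S ∩ (x+[0,2L_0)^d)`. -/
def eventA (d : ℕ) (η : ℝ) (L0 : ℕ) (x : Pt d) : Set (Config d) :=
  {ω | (∀ e : Fin d → Bool, ∃ C, bigCompIn ω η L0 (box (subCorner x L0 e) L0) C) ∧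
       (∀ e e' : Fin d → Bool, ∀ C C' : Set (Pt d), ∀ y z : Pt d,
          bigCompIn ω η L0 (box (subCorner x L0 e) L0) C →
          bigCompIn ω η L0 (box (subCorner x L0 e') L0) C' →
          y ∈ C → z ∈ C' → connIn (SS ω ∩ box x (2*L0)) y z)}

/-- The event `B^u_x`: each of the `2^d` sub-boxes of side `L_0` of `x + [0,2L_0)^d` contains at
most `(5/4)·η·L_0^d` vertices of `S_{L_0}`. -/
def eventB (d : ℕ) (η : ℝ) (L0 : ℕ) (x : Pt d) : Set (Config d) :=
  {ω | ∀ e : Fin d → Bool,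
    ((Sr ω (L0 : ℝ) ∩ box (subCorner x L0 e) L0).ncard : ℝ) ≤ (5/4 : ℝ) * η * (L0 : ℝ) ^ d}

/-- The recursive cascading of a family of "bad" seed events along the renormalization scheme. -/
def cascade (d : ℕ) (r0 l0 L0 θsc : ℕ) (seed : Pt d → Set (Config d)) :
    ℕ → Pt d → Set (Config d)
  | 0, x => seed x
  | k+1, x => {ω | ∃ x₁ x₂ : Pt d,
      x₁ ∈ lattice d (LSc l0 L0 θsc k) ∩ box x (LSc l0 L0 θsc (k+1)) ∧
      x₂ ∈ lattice d (LSc l0 L0 θsc k) ∩ box x (LSc l0 L0 θsc (k+1)) ∧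
      rSc r0 θsc k * LSc l0 L0 θsc k ≤ distInf x₁ x₂ ∧
      ω ∈ cascade d r0 l0 L0 θsc seed k x₁ ∧ ω ∈ cascade d r0 l0 L0 θsc seed k x₂}

/-- The event `Ā^u_{x,k}`. -/
def Abar (d : ℕ) (η : ℝ) (r0 l0 L0 θsc : ℕ) : ℕ → Pt d → Set (Config d) :=
  cascade d r0 l0 L0 θsc (fun x => (eventA d η L0 x)ᶜ)

/-- The event `B̄^u_{x,k}`. -/
def Bbar (d : ℕ) (η : ℝ) (r0 l0 L0 θsc : ℕ) : ℕ → Pt d → Set (Config d) :=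
  cascade d r0 l0 L0 θsc (fun x => (eventB d η L0 x)ᶜ)

/-- The event that `x ∈ G_k` is `k`-bad. -/
def kBad (d : ℕ) (η : ℝ) (r0 l0 L0 θsc k : ℕ) (x : Pt d) : Set (Config d) :=
  Abar d η r0 l0 L0 θsc k x ∪ Bbar d η r0 l0 L0 θsc k x

/-- The event `H`: (a) every vertex of `G_r ∩ B(0,3R)` is `r`-good, and (b) any two points of
`S_{L_s}` lying in a common box `z+[−2L_s,2L_s)^d`, `z ∈ B(0,2R)`, are connected inside
`S ∩ (z+[−4L_s,4L_s)^d)`. -/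
def eventH (d : ℕ) (η : ℝ) (r0 l0 L0 θsc s r R : ℕ) : Set (Config d) :=
  {ω | (∀ z ∈ lattice d (LSc l0 L0 θsc r) ∩ ballZ (0 : Pt d) (3*R),
          ω ∉ kBad d η r0 l0 L0 θsc r z) ∧
       (∀ z ∈ ballZ (0 : Pt d) (2*R),
          ∀ x ∈ Sr ω ((LSc l0 L0 θsc s : ℕ) : ℝ) ∩
                boxI z (-(2*(LSc l0 L0 θsc s) : ℤ)) (2*(LSc l0 L0 θsc s)),
          ∀ y ∈ Sr ω ((LSc l0 L0 θsc s : ℕ) : ℝ) ∩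
                boxI z (-(2*(LSc l0 L0 θsc s) : ℤ)) (2*(LSc l0 L0 θsc s)),
          connIn (SS ω ∩ boxI z (-(4*(LSc l0 L0 θsc s) : ℤ)) (4*(LSc l0 L0 θsc s))) x y)}

/-- The boundary of `A` within `g`, in the `L`-renormalized lattice: pairs of vertices of `g` at
`ℓ¹`-distance `L` with one vertex in `A` and the other in `g ∖ A`. -/
def bdWithin (L : ℕ) (g A : Set (Pt d)) : Set (Pt d × Pt d) :=
  {p | dist1 p.1 p.2 = L ∧ p.1 ∈ A ∧ p.2 ∈ g \ A}

/-- One step of an `L`-renormalized nearest-neighbour path inside `T`. -/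
def stepRelL (L : ℕ) (T : Set (Pt d)) (x y : Pt d) : Prop :=
  dist1 x y = L ∧ x ∈ T ∧ y ∈ T

/-- `x` and `y` are connected by an `L`-renormalized nearest-neighbour path inside `T`. -/
def connInL (L : ℕ) (T : Set (Pt d)) (x y : Pt d) : Prop :=
  x ∈ T ∧ y ∈ T ∧ Relation.ReflTransGen (stepRelL L T) x y

/-- The set `T` is connected as a subgraph of the `L`-renormalized lattice. -/
def IsConnL (L : ℕ) (T : Set (Pt d)) : Prop := ∀ x ∈ T, ∀ y ∈ T, connInL L T x y

/-- The infinite product `f_j(r_0/l_0) = ∏_{i=0}^∞ (1 − 3(r_i/l_i)^j)`. -/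
noncomputable def fjProd (r0 l0 θsc j : ℕ) : ℝ :=
  ∏' i : ℕ, (1 - 3 * ((rSc r0 θsc i : ℝ) / (lSc l0 θsc i)) ^ j)

/-- The affine sublattice `x₀ + ∑_{i=1}^j ℤ·e_i`. -/
def sliceSpan {j : ℕ} (x0 : Pt d) (e : Fin j → Pt d) : Set (Pt d) :=
  {y | ∃ c : Fin j → ℤ, y = x0 + ∑ i, c i • e i}

/-- The vectors `e_1,…,e_j` are pairwise orthogonal with `|e_i|₁ = 1`. -/
def orthoUnit {j : ℕ} (e : Fin j → Pt d) : Prop :=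
  (∀ i, dist1 (0 : Pt d) (e i) = 1) ∧
  Pairwise fun i i' => (∑ t, (e i t) * (e i' t)) = 0


/-! ### Auxiliary lemmas for the proof of `stmt11` -/

lemma ceil_char {L : ℤ} (hL : 0 < L) (A q : ℤ) : (A + L - 1) / L ≤ q ↔ A ≤ q * L := by
  constructor
  · intro h
    by_contra hc
    push_neg at hc
    have h2 : q + 1 ≤ (A + L - 1) / L := by
      rw [Int.le_ediv_iff_mul_le hL]; nlinarith
    omega
  · intro h
    by_contra hc
    push_neg at hc
    have h2 := (Int.le_ediv_iff_mul_le hL (a := q + 1) (b := A + L - 1)).mp (by omega)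
    nlinarith

lemma ncard_biUnion {α β : Type*} (f : α → Set β) (hfin : ∀ i, (f i).Finite) :
    ∀ I : Finset α, (∀ i ∈ I, ∀ l ∈ I, i ≠ l → Disjoint (f i) (f l)) →
      (⋃ i ∈ I, f i).ncard = ∑ i ∈ I, (f i).ncard := by
  classical
  intro I
  induction I using Finset.induction_on with
  | empty => simp
  | @insert a I ha ih =>
    intro hdisj
    have hf2 : (⋃ i ∈ I, f i).Finite := by
      apply Set.Finite.biUnion I.finite_toSet
      intro i _
      exact hfin i
    have hd : Disjoint (f a) (⋃ i ∈ I, f i) := by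
      simp only [Set.disjoint_iUnion_right]
      intro i hi
      exact hdisj a (Finset.mem_insert_self a I) i (Finset.mem_insert_of_mem hi)
        (by rintro rfl; exact ha hi)
    rw [Finset.sum_insert ha, Finset.set_biUnion_insert,
      Set.ncard_union_eq hd (hfin a) hf2,
      ih fun i hi l hl hne => hdisj i (Finset.mem_insert_of_mem hi) l (Finset.mem_insert_of_mem hl) hne]

lemma bd_accumulate {α β : Type*} (S : Set β) (hS : S.Finite) (I : Finset α) (f : α → Set β)
    (hsub : ∀ i ∈ I, f i ⊆ S)
    (hdisj : ∀ i ∈ I, ∀ l ∈ I, i ≠ l → Disjoint (f i) (f l))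
    (c : ℝ) (hc : ∀ i ∈ I, c ≤ ((f i).ncard : ℝ)) :
    (I.card : ℝ) * c ≤ (S.ncard : ℝ) := by
  classical
  have hfin : ∀ i, (if i ∈ I then f i else ∅).Finite := by
    intro i; split
    · exact hS.subset (hsub i (by assumption))
    · exact Set.finite_empty
  have key : (⋃ i ∈ I, (if i ∈ I then f i else ∅)).ncard
      = ∑ i ∈ I, (if i ∈ I then f i else ∅).ncard :=
    ncard_biUnion _ hfin I (by
      intro i hi l hl hne
      simp only [if_pos hi, if_pos hl]
      exact hdisj i hi l hl hne)
  have hsum : ∑ i ∈ I, (if i ∈ I then f i else ∅).ncard = ∑ i ∈ I, (f i).ncard :=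
    Finset.sum_congr rfl fun i hi => by rw [if_pos hi]
  have hsub2 : (⋃ i ∈ I, (if i ∈ I then f i else ∅)) ⊆ S := by
    intro z hz
    simp only [Set.mem_iUnion] at hz
    obtain ⟨i, hi, hz⟩ := hz
    rw [if_pos hi] at hz
    exact hsub i hi hz
  have hN : ∑ i ∈ I, (f i).ncard ≤ S.ncard := by
    rw [← hsum, ← key]; exact Set.ncard_le_ncard hsub2 hS
  calc (I.card : ℝ) * c = ∑ _i ∈ I, c := by rw [Finset.sum_const, nsmul_eq_mul]
    _ ≤ ∑ i ∈ I, ((f i).ncard : ℝ) := Finset.sum_le_sum hc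
    _ ≤ (S.ncard : ℝ) := by
        rw [← Nat.cast_sum]
        exact_mod_cast hN

lemma boxI_fin (x : Pt d) (lo hi : ℤ) : (boxI x lo hi).Finite := by
  apply (Set.finite_Icc (fun i => x i + lo) (fun i => x i + hi)).subset
  intro z hz
  constructor
  · intro i; exact (hz i).1
  · intro i; exact le_of_lt (hz i).2

lemma orthoUnit_struct {j : ℕ} {e : Fin j → Pt d} (he : orthoUnit e) :
    ∃ σ : Fin j → Fin d, ∃ sg : Fin j → ℤ, Function.Injective σ ∧
      (∀ i, sg i = 1 ∨ sg i = -1) ∧ (∀ i t, e i t = if t = σ i then sg i else 0) := by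
  classical
  have key : ∀ i, ∃ t0 : Fin d, (e i t0 = 1 ∨ e i t0 = -1) ∧ ∀ t, t ≠ t0 → e i t = 0 := by
    intro i
    have h1 : ∑ t, (e i t).natAbs = 1 := by
      have := he.1 i
      unfold dist1 at this
      simpa using this
    have hne : ∃ t0 ∈ Finset.univ, (e i t0).natAbs ≠ 0 := by
      by_contra hc
      push_neg at hc
      rw [Finset.sum_eq_zero (fun t ht => hc t ht)] at h1
      omega
    obtain ⟨t0, _, ht0⟩ := hne
    refine ⟨t0, ?_, ?_⟩
    · have h2 : (e i t0).natAbs = 1 := by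
        have hle : (e i t0).natAbs ≤ ∑ t, (e i t).natAbs :=
          Finset.single_le_sum (f := fun t => (e i t).natAbs) (fun t _ => Nat.zero_le _)
            (Finset.mem_univ t0)
        omega
      rcases Int.natAbs_eq (e i t0) with h | h <;> rw [h2] at h <;> [left; right] <;> omega
    · intro t ht
      have hsplit : (e i t0).natAbs + ∑ s ∈ Finset.univ.erase t0, (e i s).natAbs = 1 := by
        rw [Finset.add_sum_erase _ (fun s => (e i s).natAbs) (Finset.mem_univ t0)]; exact h1
      have hzero : ∑ s ∈ Finset.univ.erase t0, (e i s).natAbs = 0 := by omega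
      have := Finset.sum_eq_zero_iff.mp hzero t (Finset.mem_erase.mpr ⟨ht, Finset.mem_univ t⟩)
      omega
  choose σ hsg hzero using key
  refine ⟨σ, fun i => e i (σ i), ?_, hsg, ?_⟩
  · intro i i' hσ
    by_contra hne
    have horth : ∑ t, e i t * e i' t = 0 := he.2 hne
    have hsum : ∑ t, e i t * e i' t = e i (σ i) * e i' (σ i) := by
      rw [Finset.sum_eq_single (σ i)]
      · intro t _ ht; rw [hzero i t ht]; ring
      · intro h; exact absurd (Finset.mem_univ (σ i)) h
    rw [hsum, hσ] at horth
    rcases hsg i with h1 | h1 <;> rcases hsg i' with h2 | h2 <;>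
      rw [hσ] at h1 <;> rw [h1, h2] at horth <;> omega
  · intro i t
    by_cases ht : t = σ i
    · rw [if_pos ht, ht]
    · rw [if_neg ht, hzero i t ht]

set_option maxHeartbeats 3200000 in
/-- dimension-reduction step, case `j ≥ 3`, of Lemma 3.6. If all
`(j−1)`-dimensional slices of the box `x+[−L_s,2L_s)^d` are dense in `G` and satisfy a
`(j−1)`-dimensional isoperimetric inequality, and all `2`-dimensional slices satisfy a
`2`-dimensional isoperimetric inequality, then every `a' ⊆ g' = G ∩ (y + ∑ᵢ ℤ·eᵢ)` of
intermediate density satisfies the `j`-dimensional isoperimetric inequality with constant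
`min((ε/8)·γ_{j−1}, (1/3)·γ₂)`. -/
theorem stmt11 (d j : ℕ) (hd : 2 ≤ d) (hj3 : 3 ≤ j) (hjd : j ≤ d)
    (ε : ℝ) (hε : ε ∈ Set.Ioo (0:ℝ) (4/15))
    (L0 Ls : ℕ) (hL0 : 0 < L0) (hdvd : L0 ∣ Ls)
    (x : Pt d) (hx : x ∈ lattice d Ls)
    (y : Pt d) (hy : y ∈ lattice d L0 ∩ boxI x (-(Ls:ℤ)) (2*Ls))
    (e : Fin j → Pt d) (he : orthoUnit e)
    (G : Set (Pt d)) (hG : G ⊆ lattice d L0 ∩ boxI x (-(Ls:ℤ)) (2*Ls))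
    -- (i) non-empty (j−1)-dimensional slices are dense in G
    (hdens : ∀ k : ℤ,
      ({z ∈ boxI x (-(Ls:ℤ)) (2*Ls) ∩ lattice d L0 |
          ∃ c : Fin j → ℤ, c ⟨0, by omega⟩ = k * L0 ∧ z = y + ∑ i, c i • e i} : Set (Pt d)).Nonempty →
      (1 - ε/2) * ((3*(Ls:ℝ))/(L0:ℝ)) ^ (j-1) ≤
        ((G ∩ {z | ∃ c : Fin j → ℤ, c ⟨0, by omega⟩ = k * L0 ∧ z = y + ∑ i, c i • e i}).ncard : ℝ))
    -- (ii) the (j−1)-dimensional isoperimetric inequality on slices M_k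
    (γj : ℝ) (hγj : 0 < γj)
    (hMk : ∀ k : ℤ, ∀ A : Set (Pt d),
      A ⊆ G ∩ {z | ∃ c : Fin j → ℤ, c ⟨0, by omega⟩ = k * L0 ∧ z = y + ∑ i, c i • e i} →
      (ε/8) * ((3*(Ls:ℝ))/(L0:ℝ)) ^ (j-1) ≤ (A.ncard : ℝ) →
      (A.ncard : ℝ) ≤ (1 - ε/8) * ((3*(Ls:ℝ))/(L0:ℝ)) ^ (j-1) →
      γj * ((3*(Ls:ℝ))/(L0:ℝ)) ^ (j-2) ≤
        ((bdWithin L0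
          (G ∩ {z | ∃ c : Fin j → ℤ, c ⟨0, by omega⟩ = k * L0 ∧ z = y + ∑ i, c i • e i}) A).ncard : ℝ))
    -- (iii) the 2-dimensional isoperimetric inequality on slices N_t
    (γ2 : ℝ) (hγ2 : 0 < γ2)
    (hNt : ∀ t : Fin j → ℤ, ∀ A : Set (Pt d),
      A ⊆ G ∩ {z | ∃ c : Fin j → ℤ, (∀ i : Fin j, 2 ≤ (i:ℕ) → c i = t i * L0) ∧
          z = y + ∑ i, c i • e i} →
      (ε/16) * ((3*(Ls:ℝ))/(L0:ℝ)) ^ 2 ≤ (A.ncard : ℝ) →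
      (A.ncard : ℝ) ≤ (1 - ε/16) * ((3*(Ls:ℝ))/(L0:ℝ)) ^ 2 →
      γ2 * ((3*(Ls:ℝ))/(L0:ℝ)) ≤
        ((bdWithin L0
          (G ∩ {z | ∃ c : Fin j → ℤ, (∀ i : Fin j, 2 ≤ (i:ℕ) → c i = t i * L0) ∧
              z = y + ∑ i, c i • e i}) A).ncard : ℝ)) :
    ∀ a' : Set (Pt d), a' ⊆ G ∩ sliceSpan y e →
      ε * ((3*(Ls:ℝ))/(L0:ℝ)) ^ j ≤ (a'.ncard : ℝ) →
      (a'.ncard : ℝ) ≤ (1 - ε) * ((3*(Ls:ℝ))/(L0:ℝ)) ^ j →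
      min ((ε/8) * γj) ((1/3) * γ2) * ((3*(Ls:ℝ))/(L0:ℝ)) ^ (j-1) ≤
        ((bdWithin L0 (G ∩ sliceSpan y e) a').ncard : ℝ) := by
  classical
  obtain ⟨σ, sg, hσinj, hsgpm, he_eq⟩ := orthoUnit_struct he
  intro a' ha'sub ha'lo ha'hi
  obtain ⟨hε0, hε415⟩ := hε
  obtain ⟨n, hn⟩ := hdvd
  have hL0R : (0:ℝ) < (L0:ℝ) := by exact_mod_cast hL0
  have hX : (3*(Ls:ℝ))/(L0:ℝ) = ((3*n : ℕ) : ℝ) := by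
    rw [div_eq_iff (ne_of_gt hL0R)]
    push_cast [hn]
    ring
  simp only [hX] at ha'lo ha'hi hMk hNt ⊢
  rcases Nat.eq_zero_or_pos n with hn0 | hnpos
  · have h0 : ((3*n : ℕ) : ℝ) = 0 := by simp [hn0]
    rw [h0, zero_pow (by omega : j - 1 ≠ 0), mul_zero]
    positivity
  have hXpos : (0:ℝ) < ((3*n : ℕ) : ℝ) := by
    have : 0 < 3*n := by omega
    exact_mod_cast this
  set XR : ℝ := ((3*n : ℕ) : ℝ) with hXRdef
  have hL0Z : (0:ℤ) < (L0:ℤ) := by exact_mod_cast hL0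
  have hLsZ : (Ls:ℤ) = (L0:ℤ) * (n:ℤ) := by exact_mod_cast hn
  set i0 : Fin j := ⟨0, by omega⟩ with hi0def
  set i1 : Fin j := ⟨1, by omega⟩ with hi1def
  set P : Set (Pt d) := G ∩ sliceSpan y e with hPdef
  have ha'P : a' ⊆ P := ha'sub
  -- evaluation of slice representations at coordinates
  have heval : ∀ (c : Fin j → ℤ) (i' : Fin j),
      (y + ∑ i, c i • e i) (σ i') = y (σ i') + c i' * sg i' := by
    intro c i'
    have h1 : (y + ∑ i, c i • e i) (σ i') = y (σ i') + ∑ i, c i * e i (σ i') := by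
      simp only [Pi.add_apply, Finset.sum_apply, Pi.smul_apply, smul_eq_mul]
    rw [h1]
    congr 1
    rw [Finset.sum_eq_single i']
    · rw [he_eq i' (σ i'), if_pos rfl]
    · intro i _ hne
      rw [he_eq i (σ i'), if_neg (fun h => hne (hσinj h).symm), mul_zero]
    · intro h; exact absurd (Finset.mem_univ i') h
  have huniq : ∀ (c : Fin j → ℤ) (z : Pt d), z = y + ∑ i, c i • e i →
      ∀ i', c i' = (z (σ i') - y (σ i')) * sg i' := by
    intro c z hz i'
    have h1 : z (σ i') = y (σ i') + c i' * sg i' := by rw [hz]; exact heval c i'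
    rcases hsgpm i' with h | h <;> rw [h] at h1 ⊢ <;> omega
  have hdvdP : ∀ z ∈ P, ∀ i, (L0:ℤ) ∣ (z (σ i) - y (σ i)) * sg i := by
    intro z hz i
    have h1 : (L0:ℤ) ∣ z (σ i) := (hG hz.1).1 (σ i)
    have h2 : (L0:ℤ) ∣ y (σ i) := hy.1 (σ i)
    exact Dvd.dvd.mul_right (dvd_sub h1 h2) _
  set Φ : Pt d → Fin j → ℤ := fun z i => ((z (σ i) - y (σ i)) * sg i) / L0 with hΦdef
  have hΦexact : ∀ z ∈ P, ∀ i, Φ z i * L0 = (z (σ i) - y (σ i)) * sg i :=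
    fun z hz i => Int.ediv_mul_cancel (hdvdP z hz i)
  have hrep : ∀ z ∈ P, z = y + ∑ i, (Φ z i * L0) • e i := by
    intro z hz
    obtain ⟨c, hc⟩ := hz.2
    have hceq : ∀ i, c i = Φ z i * L0 := fun i => by
      rw [hΦexact z hz i]; exact huniq c z hc i
    calc z = y + ∑ i, c i • e i := hc
    _ = y + ∑ i, (Φ z i * ↑L0) • e i := by
        congr 1
        exact Finset.sum_congr rfl fun i _ => by rw [← hceq i]
  have hΦinj : Set.InjOn Φ P := by
    intro z hz w hw h
    rw [hrep z hz, hrep w hw, h]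
  have hMmem : ∀ z ∈ P, ∀ k : ℤ,
      ((∃ c : Fin j → ℤ, c ⟨0, by omega⟩ = k * L0 ∧ z = y + ∑ i, c i • e i) ↔ Φ z i0 = k) := by
    intro z hz k
    constructor
    · rintro ⟨c, hc0, hc⟩
      have h1 : c i0 = (z (σ i0) - y (σ i0)) * sg i0 := huniq c z hc i0
      have hc0' : c i0 = k * L0 := hc0
      have h2 : Φ z i0 * L0 = k * L0 := by rw [hΦexact z hz i0, ← h1, hc0']
      exact mul_right_cancel₀ (ne_of_gt hL0Z) h2
    · intro hk
      exact ⟨fun i => Φ z i * L0, congrArg (fun q : ℤ => q * (L0:ℤ)) hk, hrep z hz⟩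
  have hNmem : ∀ z ∈ P, ∀ t : Fin j → ℤ,
      ((∃ c : Fin j → ℤ, (∀ i : Fin j, 2 ≤ (i:ℕ) → c i = t i * L0) ∧ z = y + ∑ i, c i • e i)
        ↔ ∀ i : Fin j, 2 ≤ (i:ℕ) → Φ z i = t i) := by
    intro z hz t
    constructor
    · rintro ⟨c, hct, hc⟩
      intro i hi
      have h1 : c i = (z (σ i) - y (σ i)) * sg i := huniq c z hc i
      have h2 : Φ z i * L0 = t i * L0 := by rw [hΦexact z hz i, ← h1, hct i hi]
      exact mul_right_cancel₀ (ne_of_gt hL0Z) h2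
    · intro hk
      exact ⟨fun i => Φ z i * L0, fun i hi => congrArg (fun q : ℤ => q * (L0:ℤ)) (hk i hi),
        hrep z hz⟩
  -- coefficient windows
  set Aq : Fin j → ℤ :=
    fun i => if sg i = 1 then x (σ i) - Ls - y (σ i) else y (σ i) - x (σ i) - 2*Ls + 1 with hAqdef
  set q0 : Fin j → ℤ := fun i => (Aq i + L0 - 1) / L0 with hq0def
  have hq0 : ∀ (i : Fin j) (q : ℤ), q0 i ≤ q ↔ Aq i ≤ q * L0 := fun i q => ceil_char hL0Z (Aq i) q
  have hwin : ∀ z ∈ P, ∀ i, Φ z i ∈ Finset.Ico (q0 i) (q0 i + 3*(n:ℤ)) := by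
    intro z hz i
    have hbox := (hG hz.1).2 (σ i)
    have hE := hΦexact z hz i
    have h3 : 3*(n:ℤ) * (L0:ℤ) = 3 * (Ls:ℤ) := by rw [hLsZ]; ring
    have hA : Aq i ≤ (z (σ i) - y (σ i)) * sg i ∧
        (z (σ i) - y (σ i)) * sg i < Aq i + 3*(Ls:ℤ) := by
      rcases hsgpm i with h | h
      · have h1 : Aq i = x (σ i) - Ls - y (σ i) := by
          simp only [hAqdef]
          rw [if_pos h]
        rw [h1, h]
        constructor <;> omega
      · have h1 : Aq i = y (σ i) - x (σ i) - 2*Ls + 1 := by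
          simp only [hAqdef]
          rw [if_neg (by rw [h]; decide)]
        rw [h1, h]
        constructor <;> omega
    rw [Finset.mem_Ico]
    constructor
    · exact (hq0 i _).mpr (by rw [hE]; exact hA.1)
    · by_contra hc
      push_neg at hc
      have h4 : q0 i ≤ Φ z i - 3*(n:ℤ) := by omega
      have h5 : Aq i ≤ (Φ z i - 3*(n:ℤ)) * L0 := (hq0 i _).mp h4
      have h6 : (Φ z i - 3*(n:ℤ)) * (L0:ℤ) = (z (σ i) - y (σ i)) * sg i - 3*(Ls:ℤ) := by
        rw [sub_mul, hE, h3]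
      rw [h6] at h5
      omega
  -- finiteness
  have hPfin : P.Finite := (boxI_fin x (-(Ls:ℤ)) (2*Ls)).subset (fun z hz => (hG hz.1).2)
  have hafin : a'.Finite := hPfin.subset ha'P
  set Afin : Finset (Pt d) := hafin.toFinset with hAfindef
  have hAmem : ∀ z, z ∈ Afin ↔ z ∈ a' := fun z => Set.Finite.mem_toFinset hafin
  have hAP : ∀ z ∈ Afin, z ∈ P := fun z hz => ha'P ((hAmem z).mp hz)
  have ha'coe : a' = ↑Afin := (Set.Finite.coe_toFinset hafin).symm
  have hAcard : (a'.ncard : ℝ) = (Afin.card : ℝ) := by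
    rw [ha'coe, Set.ncard_coe_finset]
  -- index sets
  set K : Finset ℤ := Finset.Ico (q0 i0) (q0 i0 + 3*(n:ℤ)) with hKdef
  have hKcard : K.card = 3*n := by
    rw [hKdef, Int.card_Ico]
    omega
  have hIcoCard : ∀ i : Fin j, (Finset.Ico (q0 i) (q0 i + 3*(n:ℤ))).card = 3*n := by
    intro i; rw [Int.card_Ico]; omega
  set T : Finset (Fin j → ℤ) :=
    Fintype.piFinset (fun i => if (i:ℕ) < 2 then ({0} : Finset ℤ)
      else Finset.Ico (q0 i) (q0 i + 3*(n:ℤ))) with hTdef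
  have e0 : (i0:ℕ) = 0 := rfl
  have e1 : (i1:ℕ) = 1 := rfl
  have hc2 : (Finset.univ.filter fun i : Fin j => (i:ℕ) < 2).card = 2 := by
    have hset : (Finset.univ.filter fun i : Fin j => (i:ℕ) < 2) = {i0, i1} := by
      ext i
      simp only [Finset.mem_filter, Finset.mem_univ, true_and, Finset.mem_insert,
        Finset.mem_singleton, Fin.ext_iff, e0, e1]
      omega
    rw [hset, Finset.card_insert_of_notMem
      (by rw [Finset.mem_singleton, Fin.ext_iff, e0, e1]; omega), Finset.card_singleton]
  have hcnot2 : (Finset.univ.filter fun i : Fin j => ¬(i:ℕ) < 2).card = j - 2 := by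
    have hsum := Finset.card_filter_add_card_filter_not
      (s := (Finset.univ : Finset (Fin j))) (p := fun i : Fin j => (i:ℕ) < 2)
    rw [Finset.card_univ, Fintype.card_fin] at hsum
    omega
  have hTcard : T.card = (3*n)^(j-2) := by
    rw [hTdef, Fintype.card_piFinset]
    have h1 : ∀ i : Fin j,
        (if (i:ℕ) < 2 then ({0} : Finset ℤ) else Finset.Ico (q0 i) (q0 i + 3*(n:ℤ))).card
          = if (i:ℕ) < 2 then 1 else 3*n := by
      intro i
      split
      · exact Finset.card_singleton 0
      · exact hIcoCard i
    rw [Finset.prod_congr rfl fun i _ => h1 i, Finset.prod_ite, Finset.prod_const,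
      Finset.prod_const, hc2, hcnot2, one_pow, one_mul]
  set τ : Pt d → Fin j → ℤ := fun z i => if (i:ℕ) < 2 then 0 else Φ z i with hτdef
  have hτT : ∀ z ∈ Afin, τ z ∈ T := by
    intro z hz
    rw [hTdef, Fintype.mem_piFinset]
    intro i
    by_cases hi : (i:ℕ) < 2
    · simp only [hτdef, if_pos hi]
      exact Finset.mem_singleton_self 0
    · simp only [hτdef, if_neg hi]
      exact hwin z (hAP z hz) i
  have hkK : ∀ z ∈ Afin, Φ z i0 ∈ K := fun z hz => hwin z (hAP z hz) i0
  have hT0 : ∀ t ∈ T, ∀ i : Fin j, (i:ℕ) < 2 → t i = 0 := by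
    intro t ht i hi
    rw [hTdef, Fintype.mem_piFinset] at ht
    have h2 := ht i
    rw [if_pos hi] at h2
    exact Finset.mem_singleton.mp h2
  -- cardinalities of slices, 2d-slices and lines of a'
  set Sk : ℤ → ℕ := fun k => (Afin.filter fun z => Φ z i0 = k).card with hSkdef
  set Bt : (Fin j → ℤ) → ℕ :=
    fun t => (Afin.filter fun z => ∀ i : Fin j, 2 ≤ (i:ℕ) → Φ z i = t i).card with hBtdef
  set Ct : (Fin j → ℤ) → ℤ → ℕ :=
    fun t k => (Afin.filter fun z =>
      (∀ i : Fin j, 2 ≤ (i:ℕ) → Φ z i = t i) ∧ Φ z i0 = k).card with hCtdef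
  have hτeq : ∀ t ∈ T, ∀ z, (τ z = t ↔ ∀ i : Fin j, 2 ≤ (i:ℕ) → Φ z i = t i) := by
    intro t ht z
    constructor
    · intro h i hi
      calc Φ z i = τ z i := by simp only [hτdef]; rw [if_neg (by omega)]
      _ = t i := congrFun h i
    · intro h
      funext i
      by_cases hi : (i:ℕ) < 2
      · simp only [hτdef]
        rw [if_pos hi, hT0 t ht i hi]
      · simp only [hτdef]
        rw [if_neg hi]
        exact h i (by omega)
  have id1 : Afin.card = ∑ k ∈ K, Sk k := Finset.card_eq_sum_card_fiberwise hkK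
  have id5 : Afin.card = ∑ t ∈ T, Bt t := by
    rw [Finset.card_eq_sum_card_fiberwise hτT]
    refine Finset.sum_congr rfl fun t ht => ?_
    simp only [hBtdef]
    congr 1
    exact Finset.filter_congr fun z _ => hτeq t ht z
  have id3 : ∀ k : ℤ, Sk k = ∑ t ∈ T, Ct t k := by
    intro k
    simp only [hSkdef, hCtdef]
    rw [Finset.card_eq_sum_card_fiberwise
      (f := τ) (t := T) (fun z hz => hτT z (Finset.mem_filter.mp hz).1)]
    refine Finset.sum_congr rfl fun t ht => ?_
    rw [Finset.filter_filter]
    congr 1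
    refine Finset.filter_congr fun z _ => ?_
    constructor
    · rintro ⟨h1, h2⟩
      exact ⟨(hτeq t ht z).mp h2, h1⟩
    · rintro ⟨h1, h2⟩
      exact ⟨h2, (hτeq t ht z).mpr h1⟩
  have id4 : ∀ t : Fin j → ℤ, Bt t = ∑ k ∈ K, Ct t k := by
    intro t
    simp only [hBtdef, hCtdef]
    rw [Finset.card_eq_sum_card_fiberwise
      (f := fun z => Φ z i0) (t := K) (fun z hz => hkK z (Finset.mem_filter.mp hz).1)]
    refine Finset.sum_congr rfl fun k _ => ?_
    rw [Finset.filter_filter]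
  -- capacity bounds
  have hcap : ∀ (s : Finset (Pt d)) (PS : Fin j → Finset ℤ), (∀ z ∈ s, z ∈ Afin) →
      (∀ z ∈ s, ∀ i, Φ z i ∈ PS i) → s.card ≤ ∏ i, (PS i).card := by
    intro s PS hs hmem
    have h1 : s.card ≤ (Fintype.piFinset PS).card :=
      Finset.card_le_card_of_injOn Φ (fun z hz => Fintype.mem_piFinset.mpr (hmem z hz))
        (hΦinj.mono fun z hz => hAP z (hs z hz))
    rwa [Fintype.card_piFinset] at h1
  have hval2 : ∀ i : Fin j, i ≠ i0 → i ≠ i1 → 2 ≤ (i:ℕ) := by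
    intro i h0 h1
    by_contra hc
    push_neg at hc
    have h2 : (i:ℕ) = 0 ∨ (i:ℕ) = 1 := by omega
    rcases h2 with h2 | h2
    · exact h0 (Fin.ext (h2.trans e0.symm))
    · exact h1 (Fin.ext (h2.trans e1.symm))
  have hfilter_single : ∀ a : Fin j, (Finset.univ.filter fun i : Fin j => i = a).card = 1 := by
    intro a
    rw [Finset.filter_eq', if_pos (Finset.mem_univ a), Finset.card_singleton]
  have hfilter_ne : ∀ a : Fin j, (Finset.univ.filter fun i : Fin j => ¬ i = a).card = j - 1 := by
    intro a
    have hsum := Finset.card_filter_add_card_filter_not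
      (s := (Finset.univ : Finset (Fin j))) (p := fun i : Fin j => i = a)
    rw [Finset.card_univ, Fintype.card_fin] at hsum
    have := hfilter_single a
    omega
  have cap1 : ∀ k : ℤ, Sk k ≤ (3*n)^(j-1) := by
    intro k
    have h := hcap (Afin.filter fun z => Φ z i0 = k)
      (fun i => if i = i0 then ({k} : Finset ℤ) else Finset.Ico (q0 i) (q0 i + 3*(n:ℤ)))
      (fun z hz => (Finset.mem_filter.mp hz).1) ?_
    · have h1 : ∀ i : Fin j, ((if i = i0 then ({k} : Finset ℤ)
          else Finset.Ico (q0 i) (q0 i + 3*(n:ℤ)))).card = if i = i0 then 1 else 3*n := by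
        intro i
        split
        · exact Finset.card_singleton k
        · exact hIcoCard i
      rw [Finset.prod_congr rfl fun i _ => h1 i, Finset.prod_ite, Finset.prod_const,
        Finset.prod_const, hfilter_single i0, hfilter_ne i0, one_pow, one_mul] at h
      exact h
    · intro z hz i
      by_cases hi : i = i0
      · rw [if_pos hi, hi, Finset.mem_singleton]
        exact (Finset.mem_filter.mp hz).2
      · rw [if_neg hi]
        exact hwin z (hAP z (Finset.mem_filter.mp hz).1) i
  have capB : ∀ t : Fin j → ℤ, Bt t ≤ (3*n)^2 := by
    intro t
    have h := hcap (Afin.filter fun z => ∀ i : Fin j, 2 ≤ (i:ℕ) → Φ z i = t i)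
      (fun i => if (i:ℕ) < 2 then Finset.Ico (q0 i) (q0 i + 3*(n:ℤ)) else ({t i} : Finset ℤ))
      (fun z hz => (Finset.mem_filter.mp hz).1) ?_
    · have h1 : ∀ i : Fin j, ((if (i:ℕ) < 2 then Finset.Ico (q0 i) (q0 i + 3*(n:ℤ))
          else ({t i} : Finset ℤ))).card = if (i:ℕ) < 2 then 3*n else 1 := by
        intro i
        split
        · exact hIcoCard i
        · exact Finset.card_singleton (t i)
      rw [Finset.prod_congr rfl fun i _ => h1 i, Finset.prod_ite, Finset.prod_const,
        Finset.prod_const, hc2, hcnot2, one_pow, mul_one] at h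
      exact h
    · intro z hz i
      by_cases hi : (i:ℕ) < 2
      · rw [if_pos hi]
        exact hwin z (hAP z (Finset.mem_filter.mp hz).1) i
      · rw [if_neg hi, Finset.mem_singleton]
        exact (Finset.mem_filter.mp hz).2 i (by omega)
  have capC : ∀ (t : Fin j → ℤ) (k : ℤ), Ct t k ≤ 3*n := by
    intro t k
    have h := hcap (Afin.filter fun z =>
        (∀ i : Fin j, 2 ≤ (i:ℕ) → Φ z i = t i) ∧ Φ z i0 = k)
      (fun i => if i = i1 then Finset.Ico (q0 i) (q0 i + 3*(n:ℤ))
        else if i = i0 then ({k} : Finset ℤ) else ({t i} : Finset ℤ))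
      (fun z hz => (Finset.mem_filter.mp hz).1) ?_
    · have h1 : ∀ i : Fin j, ((if i = i1 then Finset.Ico (q0 i) (q0 i + 3*(n:ℤ))
          else if i = i0 then ({k} : Finset ℤ) else ({t i} : Finset ℤ))).card
            = if i = i1 then 3*n else 1 := by
        intro i
        by_cases hi : i = i1
        · rw [if_pos hi, if_pos hi]
          exact hIcoCard i
        · rw [if_neg hi, if_neg hi]
          split
          · exact Finset.card_singleton k
          · exact Finset.card_singleton (t i)
      rw [Finset.prod_congr rfl fun i _ => h1 i, Finset.prod_ite, Finset.prod_const,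
        Finset.prod_const, hfilter_single i1, hfilter_ne i1, one_pow, mul_one, pow_one] at h
      exact h
    · intro z hz i
      have hzz := Finset.mem_filter.mp hz
      by_cases hi : i = i1
      · rw [if_pos hi]
        exact hwin z (hAP z hzz.1) i
      · rw [if_neg hi]
        by_cases hi0 : i = i0
        · rw [if_pos hi0, hi0, Finset.mem_singleton]
          exact hzz.2.2
        · rw [if_neg hi0, Finset.mem_singleton]
          exact hzz.2.1 i (hval2 i hi0 hi)
  -- real casts
  have hYpos : (0:ℝ) < XR^(j-2) := pow_pos hXpos _
  have hZpos : (0:ℝ) < XR^(j-1) := pow_pos hXpos _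
  have hpowZ : XR^(j-1) = XR^(j-2) * XR := by
    rw [← pow_succ]
    congr 1
    omega
  have hpowJ : XR^j = XR^(j-1) * XR := by
    rw [← pow_succ]
    congr 1
    omega
  have hKcR : (K.card : ℝ) = XR := by rw [hKcard, hXRdef]
  have hTcR : (T.card : ℝ) = XR^(j-2) := by
    rw [hTcard, hXRdef]
    push_cast
    ring
  have hSkR : ∀ k : ℤ, (Sk k : ℝ) ≤ XR^(j-1) := by
    intro k
    calc (Sk k : ℝ) ≤ (((3*n)^(j-1) : ℕ) : ℝ) := by exact_mod_cast cap1 k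
    _ = XR^(j-1) := by rw [hXRdef]; push_cast; ring
  have hBtR : ∀ t, (Bt t : ℝ) ≤ XR^2 := by
    intro t
    calc (Bt t : ℝ) ≤ (((3*n)^2 : ℕ) : ℝ) := by exact_mod_cast capB t
    _ = XR^2 := by rw [hXRdef]; push_cast; ring
  have hCtR : ∀ t k, (Ct t k : ℝ) ≤ XR := by
    intro t k
    rw [hXRdef]
    exact_mod_cast capC t k
  -- sum helpers
  have hsum_leZ : ∀ (s : Finset ℤ) (f : ℤ → ℝ) (b : ℝ), (∀ k ∈ s, f k ≤ b) →
      ∑ k ∈ s, f k ≤ (s.card : ℝ) * b := by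
    intro s f b hb
    calc ∑ k ∈ s, f k ≤ ∑ _k ∈ s, b := Finset.sum_le_sum hb
    _ = s.card * b := by rw [Finset.sum_const, nsmul_eq_mul]
  have hsum_geZ : ∀ (s : Finset ℤ) (f : ℤ → ℝ) (b : ℝ), (∀ k ∈ s, b ≤ f k) →
      (s.card : ℝ) * b ≤ ∑ k ∈ s, f k := by
    intro s f b hb
    calc (s.card : ℝ) * b = ∑ _k ∈ s, b := by rw [Finset.sum_const, nsmul_eq_mul]
    _ ≤ ∑ k ∈ s, f k := Finset.sum_le_sum hb
  have hsum_leT : ∀ (s : Finset (Fin j → ℤ)) (f : (Fin j → ℤ) → ℝ) (b : ℝ),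
      (∀ t ∈ s, f t ≤ b) → ∑ t ∈ s, f t ≤ (s.card : ℝ) * b := by
    intro s f b hb
    calc ∑ t ∈ s, f t ≤ ∑ _t ∈ s, b := Finset.sum_le_sum hb
    _ = s.card * b := by rw [Finset.sum_const, nsmul_eq_mul]
  have hsum_geT : ∀ (s : Finset (Fin j → ℤ)) (f : (Fin j → ℤ) → ℝ) (b : ℝ),
      (∀ t ∈ s, b ≤ f t) → (s.card : ℝ) * b ≤ ∑ t ∈ s, f t := by
    intro s f b hb
    calc (s.card : ℝ) * b = ∑ _t ∈ s, b := by rw [Finset.sum_const, nsmul_eq_mul]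
    _ ≤ ∑ t ∈ s, f t := Finset.sum_le_sum hb
  -- the global boundary set
  set BD : Set (Pt d × Pt d) := bdWithin L0 (G ∩ sliceSpan y e) a' with hBDdef
  have hBDfin : BD.Finite := by
    apply (hafin.prod hPfin).subset
    rintro ⟨p1, p2⟩ hp
    exact ⟨hp.2.1, hp.2.2.1⟩
  rw [hAcard] at ha'lo ha'hi
  -- classification of slices and 2d-slices
  set KM := K.filter (fun k => (Sk k : ℝ) < ε/8 * XR^(j-1)) with hKMdef
  set Krest := K.filter (fun k => ¬ ((Sk k : ℝ) < ε/8 * XR^(j-1))) with hKrestdef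
  set Gd := Krest.filter (fun k => (Sk k : ℝ) ≤ (1-ε/8) * XR^(j-1)) with hGddef
  set KP := Krest.filter (fun k => ¬ ((Sk k : ℝ) ≤ (1-ε/8) * XR^(j-1))) with hKPdef
  set LT := T.filter (fun t => (Bt t : ℝ) < ε/16 * XR^2) with hLTdef
  set Trest := T.filter (fun t => ¬ ((Bt t : ℝ) < ε/16 * XR^2)) with hTrestdef
  set G2 := Trest.filter (fun t => (Bt t : ℝ) ≤ (1-ε/16) * XR^2) with hG2def
  set HV := Trest.filter (fun t => ¬ ((Bt t : ℝ) ≤ (1-ε/16) * XR^2)) with hHVdef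
  have hKMsubK : KM ⊆ K := Finset.filter_subset _ _
  have hKPsubK : KP ⊆ K := Finset.Subset.trans (Finset.filter_subset _ _) (Finset.filter_subset _ _)
  have hGdsubK : Gd ⊆ K := Finset.Subset.trans (Finset.filter_subset _ _) (Finset.filter_subset _ _)
  have hLTsubT : LT ⊆ T := Finset.filter_subset _ _
  have hG2subT : G2 ⊆ T := Finset.Subset.trans (Finset.filter_subset _ _) (Finset.filter_subset _ _)
  have hHVsubT : HV ⊆ T := Finset.Subset.trans (Finset.filter_subset _ _) (Finset.filter_subset _ _)
  have hKM_mem : ∀ k ∈ KM, (Sk k : ℝ) < ε/8 * XR^(j-1) := fun k hk => (Finset.mem_filter.mp hk).2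
  have hGd_mem : ∀ k ∈ Gd, ε/8 * XR^(j-1) ≤ (Sk k : ℝ) ∧ (Sk k : ℝ) ≤ (1-ε/8) * XR^(j-1) := by
    intro k hk
    have h1 := Finset.mem_filter.mp hk
    exact ⟨not_lt.mp (Finset.mem_filter.mp h1.1).2, h1.2⟩
  have hKP_mem : ∀ k ∈ KP, (1-ε/8) * XR^(j-1) < (Sk k : ℝ) := by
    intro k hk
    exact not_le.mp (Finset.mem_filter.mp hk).2
  have hLT_mem : ∀ t ∈ LT, (Bt t : ℝ) < ε/16 * XR^2 := fun t ht => (Finset.mem_filter.mp ht).2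
  have hG2_mem : ∀ t ∈ G2, ε/16 * XR^2 ≤ (Bt t : ℝ) ∧ (Bt t : ℝ) ≤ (1-ε/16) * XR^2 := by
    intro t ht
    have h1 := Finset.mem_filter.mp ht
    exact ⟨not_lt.mp (Finset.mem_filter.mp h1.1).2, h1.2⟩
  have hHV_mem : ∀ t ∈ HV, (1-ε/16) * XR^2 < (Bt t : ℝ) := by
    intro t ht
    exact not_le.mp (Finset.mem_filter.mp ht).2
  have hKsplit : KM.card + (Gd.card + KP.card) = K.card := by
    have h1 : Gd.card + KP.card = Krest.card :=
      Finset.card_filter_add_card_filter_not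
        (s := Krest) (p := fun k => (Sk k : ℝ) ≤ (1-ε/8) * XR^(j-1))
    have h2 : KM.card + Krest.card = K.card :=
      Finset.card_filter_add_card_filter_not
        (s := K) (p := fun k => (Sk k : ℝ) < ε/8 * XR^(j-1))
    omega
  have hKsum : ∑ k ∈ KM, (Sk k : ℝ) + (∑ k ∈ Gd, (Sk k : ℝ) + ∑ k ∈ KP, (Sk k : ℝ))
      = ∑ k ∈ K, (Sk k : ℝ) := by
    have h1 : ∑ k ∈ Gd, (Sk k : ℝ) + ∑ k ∈ KP, (Sk k : ℝ) = ∑ k ∈ Krest, (Sk k : ℝ) :=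
      Finset.sum_filter_add_sum_filter_not Krest _ _
    have h2 : ∑ k ∈ KM, (Sk k : ℝ) + ∑ k ∈ Krest, (Sk k : ℝ) = ∑ k ∈ K, (Sk k : ℝ) :=
      Finset.sum_filter_add_sum_filter_not K _ _
    rw [h1, h2]
  have hAR1 : (Afin.card : ℝ) = ∑ k ∈ K, (Sk k : ℝ) := by rw [id1, Nat.cast_sum]
  -- the slice sets appearing in the hypotheses
  set Msl : ℤ → Set (Pt d) := fun k =>
    {z | ∃ c : Fin j → ℤ, c ⟨0, by omega⟩ = k * (L0:ℤ) ∧ z = y + ∑ i, c i • e i} with hMsldef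
  set Nsl : (Fin j → ℤ) → Set (Pt d) := fun t =>
    {z | ∃ c : Fin j → ℤ, (∀ i : Fin j, 2 ≤ (i:ℕ) → c i = t i * (L0:ℤ)) ∧
      z = y + ∑ i, c i • e i} with hNsldef
  have hMslmem : ∀ z ∈ P, ∀ k : ℤ, (z ∈ Msl k ↔ Φ z i0 = k) := fun z hz k => hMmem z hz k
  have hNslmem : ∀ z ∈ P, ∀ t : Fin j → ℤ,
      (z ∈ Nsl t ↔ ∀ i : Fin j, 2 ≤ (i:ℕ) → Φ z i = t i) := fun z hz t => hNmem z hz t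
  have hMslset : ∀ k : ℤ, a' ∩ Msl k = ↑(Afin.filter fun z => Φ z i0 = k) := by
    intro k
    ext z
    simp only [Set.mem_inter_iff, Finset.mem_coe, Finset.mem_filter, hAmem]
    constructor
    · rintro ⟨hz1, hz2⟩
      exact ⟨hz1, (hMslmem z (ha'P hz1) k).mp hz2⟩
    · rintro ⟨hz1, hz2⟩
      exact ⟨hz1, (hMslmem z (ha'P hz1) k).mpr hz2⟩
  have hNslset : ∀ t : Fin j → ℤ,
      a' ∩ Nsl t = ↑(Afin.filter fun z => ∀ i : Fin j, 2 ≤ (i:ℕ) → Φ z i = t i) := by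
    intro t
    ext z
    simp only [Set.mem_inter_iff, Finset.mem_coe, Finset.mem_filter, hAmem]
    constructor
    · rintro ⟨hz1, hz2⟩
      exact ⟨hz1, (hNslmem z (ha'P hz1) t).mp hz2⟩
    · rintro ⟨hz1, hz2⟩
      exact ⟨hz1, (hNslmem z (ha'P hz1) t).mpr hz2⟩
  by_cases cA : ε/8 * XR ≤ (Gd.card : ℝ)
  · -- Case A : many (j-1)-dimensional slices have intermediate density
    have key : ∀ k ∈ Gd, γj * XR^(j-2) ≤
        ((bdWithin L0 (G ∩ Msl k) (a' ∩ Msl k)).ncard : ℝ) := by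
      intro k hk
      have hncard : ((a' ∩ Msl k).ncard : ℝ) = (Sk k : ℝ) := by
        rw [hMslset k, Set.ncard_coe_finset]
      refine hMk k (a' ∩ Msl k) ?_ ?_ ?_
      · intro z hz
        exact ⟨(ha'sub hz.1).1, hz.2⟩
      · rw [hncard]
        exact (hGd_mem k hk).1
      · rw [hncard]
        exact (hGd_mem k hk).2
    have hacc := bd_accumulate BD hBDfin Gd
      (fun k => bdWithin L0 (G ∩ Msl k) (a' ∩ Msl k)) ?_ ?_ (γj * XR^(j-2)) key
    · calc min (ε/8 * γj) (1/3 * γ2) * XR^(j-1)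
          ≤ (ε/8 * γj) * XR^(j-1) :=
            mul_le_mul_of_nonneg_right (min_le_left _ _) hZpos.le
      _ = (ε/8 * XR) * (γj * XR^(j-2)) := by rw [hpowZ]; ring
      _ ≤ (Gd.card : ℝ) * (γj * XR^(j-2)) :=
            mul_le_mul_of_nonneg_right cA (by positivity)
      _ ≤ (BD.ncard : ℝ) := hacc
    · intro k _ p hp
      obtain ⟨hd1, hp1, hp2⟩ := hp
      have hp2slice : p.2 ∈ sliceSpan y e := by
        obtain ⟨c, _, hc⟩ := hp2.1.2
        exact ⟨c, hc⟩
      refine ⟨hd1, hp1.1, ⟨⟨hp2.1.1, hp2slice⟩, ?_⟩⟩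
      intro hcon
      exact hp2.2 ⟨hcon, hp2.1.2⟩
    · intro k hk l hl hne
      rw [Set.disjoint_left]
      intro p hp hq
      have h1 : Φ p.1 i0 = k := (hMslmem p.1 (ha'P hp.2.1.1) k).mp hp.2.1.2
      have h2 : Φ p.1 i0 = l := (hMslmem p.1 (ha'P hq.2.1.1) l).mp hq.2.1.2
      exact hne (h1.symm.trans h2)
  by_cases cB : 1/3 * XR^(j-2) ≤ (G2.card : ℝ)
  · -- Case B : many 2-dimensional slices have intermediate density
    have key : ∀ t ∈ G2, γ2 * XR ≤
        ((bdWithin L0 (G ∩ Nsl t) (a' ∩ Nsl t)).ncard : ℝ) := by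
      intro t ht
      have hncard : ((a' ∩ Nsl t).ncard : ℝ) = (Bt t : ℝ) := by
        rw [hNslset t, Set.ncard_coe_finset]
      refine hNt t (a' ∩ Nsl t) ?_ ?_ ?_
      · intro z hz
        exact ⟨(ha'sub hz.1).1, hz.2⟩
      · rw [hncard]
        exact (hG2_mem t ht).1
      · rw [hncard]
        exact (hG2_mem t ht).2
    have hacc := bd_accumulate BD hBDfin G2
      (fun t => bdWithin L0 (G ∩ Nsl t) (a' ∩ Nsl t)) ?_ ?_ (γ2 * XR) key
    · calc min (ε/8 * γj) (1/3 * γ2) * XR^(j-1)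
          ≤ (1/3 * γ2) * XR^(j-1) :=
            mul_le_mul_of_nonneg_right (min_le_right _ _) hZpos.le
      _ = (1/3 * XR^(j-2)) * (γ2 * XR) := by rw [hpowZ]; ring
      _ ≤ (G2.card : ℝ) * (γ2 * XR) :=
            mul_le_mul_of_nonneg_right cB (by positivity)
      _ ≤ (BD.ncard : ℝ) := hacc
    · intro t _ p hp
      obtain ⟨hd1, hp1, hp2⟩ := hp
      have hp2slice : p.2 ∈ sliceSpan y e := by
        obtain ⟨c, _, hc⟩ := hp2.1.2
        exact ⟨c, hc⟩
      refine ⟨hd1, hp1.1, ⟨⟨hp2.1.1, hp2slice⟩, ?_⟩⟩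
      intro hcon
      exact hp2.2 ⟨hcon, hp2.1.2⟩
    · intro t ht l hl hne
      rw [Set.disjoint_left]
      intro p hp hq
      have h1 := (hNslmem p.1 (ha'P hp.2.1.1) t).mp hp.2.1.2
      have h2 := (hNslmem p.1 (ha'P hq.2.1.1) l).mp hq.2.1.2
      refine absurd ?_ hne
      funext i
      by_cases hi : (i:ℕ) < 2
      · rw [hT0 t (hG2subT ht) i hi, hT0 l (hG2subT hl) i hi]
      · rw [← h1 i (by omega), ← h2 i (by omega)]
  -- Case C : impossible
  exfalso
  push_neg at cA cB
  -- counting slices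
  have hSKM : ∑ k ∈ KM, (Sk k : ℝ) ≤ (KM.card : ℝ) * (ε/8 * XR^(j-1)) :=
    hsum_leZ KM _ _ (fun k hk => le_of_lt (hKM_mem k hk))
  have hSGd : ∑ k ∈ Gd, (Sk k : ℝ) ≤ (Gd.card : ℝ) * XR^(j-1) :=
    hsum_leZ Gd _ _ (fun k _ => hSkR k)
  have hSKP_le : ∑ k ∈ KP, (Sk k : ℝ) ≤ (KP.card : ℝ) * XR^(j-1) :=
    hsum_leZ KP _ _ (fun k _ => hSkR k)
  have hSKP_ge : (KP.card : ℝ) * ((1-ε/8) * XR^(j-1)) ≤ ∑ k ∈ KP, (Sk k : ℝ) :=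
    hsum_geZ KP _ _ (fun k hk => le_of_lt (hKP_mem k hk))
  have hSKM_ge : (0:ℝ) ≤ ∑ k ∈ KM, (Sk k : ℝ) := Finset.sum_nonneg fun k _ => Nat.cast_nonneg _
  have hSGd_ge : (0:ℝ) ≤ ∑ k ∈ Gd, (Sk k : ℝ) := Finset.sum_nonneg fun k _ => Nat.cast_nonneg _
  have hKMleX : (KM.card : ℝ) ≤ XR := by
    rw [← hKcR]
    exact_mod_cast Finset.card_le_card hKMsubK
  have hcards : (KM.card : ℝ) + (Gd.card : ℝ) + (KP.card : ℝ) = XR := by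
    rw [← hKcR]
    exact_mod_cast (by omega : KM.card + Gd.card + KP.card = K.card)
  have hAcard_lo : ε * (XR^(j-1) * XR) ≤ (Afin.card : ℝ) := by rw [← hpowJ]; exact ha'lo
  have hAcard_hi : (Afin.card : ℝ) ≤ (1-ε) * (XR^(j-1) * XR) := by rw [← hpowJ]; exact ha'hi
  have hKPlow : 3*ε/4 * XR ≤ (KP.card : ℝ) := by
    have h1 : ε * (XR^(j-1) * XR) ≤ (KM.card : ℝ) * (ε/8 * XR^(j-1))
        + (Gd.card : ℝ) * XR^(j-1) + (KP.card : ℝ) * XR^(j-1) := by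
      rw [hAR1, ← hKsum] at hAcard_lo
      linarith only [hAcard_lo, hSKM, hSGd, hSKP_le]
    have h2 : (KM.card : ℝ) * (ε/8 * XR^(j-1)) ≤ XR * (ε/8 * XR^(j-1)) :=
      mul_le_mul_of_nonneg_right hKMleX (by positivity)
    have h3 : (Gd.card : ℝ) * XR^(j-1) ≤ (ε/8 * XR) * XR^(j-1) :=
      mul_le_mul_of_nonneg_right (le_of_lt cA) hZpos.le
    have h4 : (3*ε/4 * XR) * XR^(j-1) ≤ (KP.card : ℝ) * XR^(j-1) := by
      linarith only [h1, h2, h3]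
    exact le_of_mul_le_mul_right h4 hZpos
  have hKPhigh : (KP.card : ℝ) * (1-ε/8) ≤ (1-ε) * XR := by
    have h1 : (KP.card : ℝ) * ((1-ε/8) * XR^(j-1)) ≤ (1-ε) * (XR^(j-1) * XR) := by
      rw [hAR1, ← hKsum] at hAcard_hi
      linarith only [hAcard_hi, hSKP_ge, hSKM_ge, hSGd_ge]
    have h2 : ((KP.card : ℝ) * (1-ε/8)) * XR^(j-1) ≤ ((1-ε) * XR) * XR^(j-1) := by
      linarith only [h1]
    exact le_of_mul_le_mul_right h2 hZpos
  have h18 : (0:ℝ) < 1 - ε/8 := by linarith only [hε415]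
  have hKMlow : 3*ε/4 * XR ≤ (KM.card : ℝ) := by
    have hc2' : ((KM.card : ℝ) + (Gd.card : ℝ) + (KP.card : ℝ)) * (1-ε/8) = XR * (1-ε/8) := by
      rw [hcards]
    have hGdXR : (Gd.card : ℝ) * (1-ε/8) ≤ (ε/8*XR) * (1-ε/8) :=
      mul_le_mul_of_nonneg_right cA.le h18.le
    have hε2XR : (0:ℝ) ≤ ε^2 * XR := by positivity
    have hgoal' : (3*ε/4 * XR) * (1-ε/8) ≤ (KM.card : ℝ) * (1-ε/8) := by
      linarith only [hc2', hGdXR, hKPhigh, hε2XR]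
    exact le_of_mul_le_mul_right hgoal' h18
  have hKMpos : (0:ℝ) < (KM.card : ℝ) := by
    have h19 : (0:ℝ) < 3*ε/4 * XR := by positivity
    linarith only [hKMlow, h19]
  have hKPpos : (0:ℝ) < (KP.card : ℝ) := by
    have h19 : (0:ℝ) < 3*ε/4 * XR := by positivity
    linarith only [hKPlow, h19]
  -- full lines
  set Fk : ℤ → ℕ := fun k => (T.filter fun t => XR/2 ≤ (Ct t k : ℝ)).card with hFkdef
  have hFKP : ∀ k ∈ KP, (1-ε/4) * XR^(j-2) ≤ (Fk k : ℝ) := by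
    intro k hk
    have h1 : (1-ε/8) * (XR^(j-2) * XR) < (Sk k : ℝ) := by
      rw [← hpowZ]
      exact hKP_mem k hk
    have h2 : (Sk k : ℝ) = ∑ t ∈ T, (Ct t k : ℝ) := by rw [id3 k, Nat.cast_sum]
    have hsplit : ∑ t ∈ T.filter (fun t => XR/2 ≤ (Ct t k : ℝ)), (Ct t k : ℝ)
        + ∑ t ∈ T.filter (fun t => ¬ XR/2 ≤ (Ct t k : ℝ)), (Ct t k : ℝ)
        = ∑ t ∈ T, (Ct t k : ℝ) := Finset.sum_filter_add_sum_filter_not T _ _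
    have h3 : ∑ t ∈ T.filter (fun t => XR/2 ≤ (Ct t k : ℝ)), (Ct t k : ℝ)
        ≤ (Fk k : ℝ) * XR := hsum_leT _ _ _ (fun t _ => hCtR t k)
    have hnf : ((T.filter (fun t => ¬ XR/2 ≤ (Ct t k : ℝ))).card : ℝ) = XR^(j-2) - (Fk k : ℝ) := by
      have h6 : Fk k + (T.filter (fun t => ¬ XR/2 ≤ (Ct t k : ℝ))).card = T.card :=
        Finset.card_filter_add_card_filter_not
          (s := T) (p := fun t => XR/2 ≤ (Ct t k : ℝ))
      have h7 : (Fk k : ℝ) + ((T.filter (fun t => ¬ XR/2 ≤ (Ct t k : ℝ))).card : ℝ)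
          = XR^(j-2) := by
        rw [← hTcR]
        exact_mod_cast h6
      linarith only [h7]
    have h4 : ∑ t ∈ T.filter (fun t => ¬ XR/2 ≤ (Ct t k : ℝ)), (Ct t k : ℝ)
        ≤ (XR^(j-2) - (Fk k : ℝ)) * (XR/2) := by
      rw [← hnf]
      exact hsum_leT _ _ _ (fun t ht => le_of_lt (not_le.mp (Finset.mem_filter.mp ht).2))
    have hchain : ((1-ε/4) * XR^(j-2)) * (XR/2) < (Fk k : ℝ) * (XR/2) := by
      linarith only [h1, h2, hsplit, h3, h4]
    exact le_of_lt ((mul_lt_mul_iff_left₀ (by positivity : (0:ℝ) < XR/2)).mp hchain)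
  have hFKM : ∀ k ∈ KM, (Fk k : ℝ) ≤ ε/4 * XR^(j-2) := by
    intro k hk
    have h1 : (Sk k : ℝ) < ε/8 * (XR^(j-2) * XR) := by
      rw [← hpowZ]
      exact hKM_mem k hk
    have h2 : (Sk k : ℝ) = ∑ t ∈ T, (Ct t k : ℝ) := by rw [id3 k, Nat.cast_sum]
    have h3 : (Fk k : ℝ) * (XR/2) ≤ ∑ t ∈ T.filter (fun t => XR/2 ≤ (Ct t k : ℝ)), (Ct t k : ℝ) :=
      hsum_geT _ _ _ (fun t ht => (Finset.mem_filter.mp ht).2)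
    have h4 : ∑ t ∈ T.filter (fun t => XR/2 ≤ (Ct t k : ℝ)), (Ct t k : ℝ)
        ≤ ∑ t ∈ T, (Ct t k : ℝ) :=
      Finset.sum_le_sum_of_subset_of_nonneg (Finset.filter_subset _ _)
        (fun t _ _ => Nat.cast_nonneg _)
    have hchain : (Fk k : ℝ) * (XR/2) ≤ (ε/4 * XR^(j-2)) * (XR/2) := by
      linarith only [h1, h2, h3, h4]
    exact le_of_mul_le_mul_right hchain (by positivity : (0:ℝ) < XR/2)
  -- per-2d-slice counts
  set vKM : (Fin j → ℤ) → ℕ := fun t => (KM.filter fun k => XR/2 ≤ (Ct t k : ℝ)).card with hvdef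
  set uKP : (Fin j → ℤ) → ℕ := fun t => (KP.filter fun k => XR/2 ≤ (Ct t k : ℝ)).card with hudef
  have hv_lo : ∀ t ∈ HV, 5/6 * (KM.card : ℝ) ≤ (vKM t : ℝ) := by
    intro t ht
    have h1 : (1-ε/16) * XR^2 < (Bt t : ℝ) := hHV_mem t ht
    have h2 : (Bt t : ℝ) = ∑ k ∈ K, (Ct t k : ℝ) := by rw [id4 t, Nat.cast_sum]
    set NFK : ℕ := (K.filter fun k => ¬ XR/2 ≤ (Ct t k : ℝ)).card with hNFKdef
    have hsplit : ∑ k ∈ K.filter (fun k => XR/2 ≤ (Ct t k : ℝ)), (Ct t k : ℝ)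
        + ∑ k ∈ K.filter (fun k => ¬ XR/2 ≤ (Ct t k : ℝ)), (Ct t k : ℝ)
        = ∑ k ∈ K, (Ct t k : ℝ) := Finset.sum_filter_add_sum_filter_not K _ _
    have hnf : ((K.filter (fun k => XR/2 ≤ (Ct t k : ℝ))).card : ℝ) = XR - (NFK : ℝ) := by
      have h6 : (K.filter (fun k => XR/2 ≤ (Ct t k : ℝ))).card + NFK = K.card :=
        Finset.card_filter_add_card_filter_not
          (s := K) (p := fun k => XR/2 ≤ (Ct t k : ℝ))
      have h7 : ((K.filter (fun k => XR/2 ≤ (Ct t k : ℝ))).card : ℝ) + (NFK : ℝ) = XR := by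
        have h8 : ((K.filter (fun k => XR/2 ≤ (Ct t k : ℝ))).card : ℝ) + (NFK : ℝ)
            = (K.card : ℝ) := by exact_mod_cast h6
        rw [hKcR] at h8
        exact h8
      linarith only [h7]
    have h3 : ∑ k ∈ K.filter (fun k => XR/2 ≤ (Ct t k : ℝ)), (Ct t k : ℝ)
        ≤ (XR - (NFK : ℝ)) * XR := by
      rw [← hnf]
      exact hsum_leZ _ _ _ (fun k _ => hCtR t k)
    have h4 : ∑ k ∈ K.filter (fun k => ¬ XR/2 ≤ (Ct t k : ℝ)), (Ct t k : ℝ)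
        ≤ (NFK : ℝ) * (XR/2) :=
      hsum_leZ _ _ _ (fun k hk => le_of_lt (not_le.mp (Finset.mem_filter.mp hk).2))
    have hXsq : XR^2 = XR * XR := by ring
    have hNFKle : (NFK : ℝ) * (XR/2) < (ε/8 * XR) * (XR/2) := by
      linarith only [h1, h2, hsplit, h3, h4, hXsq]
    have hNFK2 : (NFK : ℝ) ≤ ε/8 * XR :=
      le_of_lt ((mul_lt_mul_iff_left₀ (by positivity : (0:ℝ) < XR/2)).mp hNFKle)
    have hsplitKM : vKM t + (KM.filter fun k => ¬ XR/2 ≤ (Ct t k : ℝ)).card = KM.card :=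
      Finset.card_filter_add_card_filter_not
        (s := KM) (p := fun k => XR/2 ≤ (Ct t k : ℝ))
    have hsub2 : ((KM.filter fun k => ¬ XR/2 ≤ (Ct t k : ℝ)).card : ℝ) ≤ (NFK : ℝ) := by
      exact_mod_cast Finset.card_le_card (Finset.filter_subset_filter _ hKMsubK)
    have hvge : (vKM t : ℝ) ≥ (KM.card : ℝ) - (NFK : ℝ) := by
      have hX2 := congrArg (Nat.cast : ℕ → ℝ) hsplitKM
      push_cast at hX2
      linarith only [hX2, hsub2]
    linarith only [hvge, hNFK2, hKMlow]
  have hu_hi_LT : ∀ t ∈ LT, (uKP t : ℝ) ≤ 1/6 * (KP.card : ℝ) := by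
    intro t ht
    have h1 : (Bt t : ℝ) < ε/16 * XR^2 := hLT_mem t ht
    have h2 : (Bt t : ℝ) = ∑ k ∈ K, (Ct t k : ℝ) := by rw [id4 t, Nat.cast_sum]
    have h3 : (uKP t : ℝ) * (XR/2) ≤ ∑ k ∈ KP.filter (fun k => XR/2 ≤ (Ct t k : ℝ)), (Ct t k : ℝ) :=
      hsum_geZ _ _ _ (fun k hk => (Finset.mem_filter.mp hk).2)
    have h4 : ∑ k ∈ KP.filter (fun k => XR/2 ≤ (Ct t k : ℝ)), (Ct t k : ℝ)
        ≤ ∑ k ∈ K, (Ct t k : ℝ) :=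
      Finset.sum_le_sum_of_subset_of_nonneg
        (Finset.Subset.trans (Finset.filter_subset _ _) hKPsubK)
        (fun k _ _ => Nat.cast_nonneg _)
    have hXsq : XR^2 = XR * XR := by ring
    have h5 : (uKP t : ℝ) * (XR/2) < (ε/8 * XR) * (XR/2) := by
      linarith only [h1, h2, h3, h4, hXsq]
    have h6 : (uKP t : ℝ) ≤ ε/8 * XR :=
      le_of_lt ((mul_lt_mul_iff_left₀ (by positivity : (0:ℝ) < XR/2)).mp h5)
    linarith only [h6, hKPlow]
  have hu_le : ∀ t, (uKP t : ℝ) ≤ (KP.card : ℝ) := by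
    intro t
    exact_mod_cast Finset.card_le_card (Finset.filter_subset _ _)
  -- double counting
  have hDC1 : ∑ k ∈ KM, Fk k = ∑ t ∈ T, vKM t := by
    simp only [hFkdef, hvdef, Finset.card_filter]
    exact Finset.sum_comm
  have hDC2 : ∑ k ∈ KP, Fk k = ∑ t ∈ T, uKP t := by
    simp only [hFkdef, hudef, Finset.card_filter]
    exact Finset.sum_comm
  have hDC1R : ∑ k ∈ KM, (Fk k : ℝ) = ∑ t ∈ T, (vKM t : ℝ) := by
    have := congrArg (Nat.cast : ℕ → ℝ) hDC1
    push_cast at this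
    exact this
  have hDC2R : ∑ k ∈ KP, (Fk k : ℝ) = ∑ t ∈ T, (uKP t : ℝ) := by
    have := congrArg (Nat.cast : ℕ → ℝ) hDC2
    push_cast at this
    exact this
  -- upper bound on the number of heavy 2d-slices
  have hHVle : (HV.card : ℝ) ≤ 3*ε/10 * XR^(j-2) := by
    have h1 : (HV.card : ℝ) * (5/6 * (KM.card : ℝ)) ≤ ∑ t ∈ HV, (vKM t : ℝ) :=
      hsum_geT HV _ _ hv_lo
    have h2 : ∑ t ∈ HV, (vKM t : ℝ) ≤ ∑ t ∈ T, (vKM t : ℝ) :=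
      Finset.sum_le_sum_of_subset_of_nonneg hHVsubT (fun t _ _ => Nat.cast_nonneg _)
    have h3 : ∑ k ∈ KM, (Fk k : ℝ) ≤ (KM.card : ℝ) * (ε/4 * XR^(j-2)) :=
      hsum_leZ KM _ _ hFKM
    have h4 : ((HV.card : ℝ) * (5/6)) * (KM.card : ℝ)
        ≤ ((3*ε/10 * XR^(j-2)) * (5/6)) * (KM.card : ℝ) := by
      linarith only [h1, h2, h3, hDC1R]
    have h5 := le_of_mul_le_mul_right h4 hKMpos
    linarith only [h5]
  -- lower bound on the number of heavy 2d-slices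
  have hHVge : (1/2 - ε/4) * XR^(j-2) ≤ (HV.card : ℝ) := by
    have h1 : (KP.card : ℝ) * ((1-ε/4) * XR^(j-2)) ≤ ∑ k ∈ KP, (Fk k : ℝ) :=
      hsum_geZ KP _ _ hFKP
    have h3a : ∑ t ∈ G2, (uKP t : ℝ) + ∑ t ∈ HV, (uKP t : ℝ) = ∑ t ∈ Trest, (uKP t : ℝ) :=
      Finset.sum_filter_add_sum_filter_not Trest _ _
    have h3b : ∑ t ∈ LT, (uKP t : ℝ) + ∑ t ∈ Trest, (uKP t : ℝ) = ∑ t ∈ T, (uKP t : ℝ) :=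
      Finset.sum_filter_add_sum_filter_not T _ _
    have h4 : ∑ t ∈ LT, (uKP t : ℝ) ≤ (LT.card : ℝ) * (1/6 * (KP.card : ℝ)) :=
      hsum_leT LT _ _ hu_hi_LT
    have hLTcard : (LT.card : ℝ) ≤ XR^(j-2) := by
      rw [← hTcR]
      exact_mod_cast Finset.card_le_card hLTsubT
    have h4' : ∑ t ∈ LT, (uKP t : ℝ) ≤ XR^(j-2) * (1/6 * (KP.card : ℝ)) :=
      le_trans h4 (mul_le_mul_of_nonneg_right hLTcard (mul_nonneg (by norm_num) (Nat.cast_nonneg _)))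
    have h5 : ∑ t ∈ G2, (uKP t : ℝ) ≤ (G2.card : ℝ) * (KP.card : ℝ) :=
      hsum_leT G2 _ _ (fun t _ => hu_le t)
    have h6 : ∑ t ∈ HV, (uKP t : ℝ) ≤ (HV.card : ℝ) * (KP.card : ℝ) :=
      hsum_leT HV _ _ (fun t _ => hu_le t)
    have h7 : ((1-ε/4) * XR^(j-2)) * (KP.card : ℝ)
        ≤ ((1/6 * XR^(j-2)) + (G2.card : ℝ) + (HV.card : ℝ)) * (KP.card : ℝ) := by
      linarith only [h1, hDC2R, h3a, h3b, h4', h5, h6]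
    have h8 := le_of_mul_le_mul_right h7 hKPpos
    linarith only [h8, cB]
  have hcoef : (0:ℝ) < 1/2 - ε/4 - 3*ε/10 := by linarith only [hε415, hε0]
  linarith only [hHVle, hHVge, mul_pos hcoef hYpos]

end Perco
end

section
/- Assume the family {P^u}_{u∈(a,b)} satisfies S1. Then for any u ∈ (a,b): P^u-almost surely, the set S_∞ is non-empty and connected, and there exist c₁ = c₁(u) > 0 and C₁ = C₁(u) < ∞ such that for all R ≥ 1, P^u[S_∞ ∩ B(0,R) ≠ ∅] ≥ 1 − C₁·e^{−c₁(log R)^{1+Δ_S}}. -/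
open MeasureTheory Filter
open scoped ENNReal

namespace Perco

variable {d : ℕ}

-- basic facts
lemma dist1_symm (x y : Pt d) : dist1 x y = dist1 y x := by
  unfold dist1; exact Finset.sum_congr rfl fun i _ => by omega

lemma dist1_triangle (x y z : Pt d) : dist1 x z ≤ dist1 x y + dist1 y z := by
  unfold dist1; rw [← Finset.sum_add_distrib]
  exact Finset.sum_le_sum fun i _ => by omega

lemma adj_symm {x y : Pt d} (h : adj x y) : adj y x := by
  unfold adj at *; rw [dist1_symm]; exact h

lemma connIn_refl {T : Set (Pt d)} {x : Pt d} (hx : x ∈ T) : connIn T x x :=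
  ⟨hx, hx, Relation.ReflTransGen.refl⟩

lemma connIn_trans {T : Set (Pt d)} {x y z : Pt d} (h1 : connIn T x y) (h2 : connIn T y z) :
    connIn T x z := ⟨h1.1, h2.2.1, h1.2.2.trans h2.2.2⟩

lemma connIn_symm {T : Set (Pt d)} {x y : Pt d} (h : connIn T x y) : connIn T y x := by
  refine ⟨h.2.1, h.1, ?_⟩
  have hs : Symmetric (stepRel T) := fun a b hab => ⟨adj_symm hab.1, hab.2.2, hab.2.1⟩
  haveI : Std.Symm (stepRel T) := ⟨hs⟩
  exact Relation.ReflTransGen.symmetric.symm _ _ h.2.2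

lemma connIn_mono {T T' : Set (Pt d)} (hT : T ⊆ T') {x y : Pt d} (h : connIn T x y) :
    connIn T' x y := by
  refine ⟨hT h.1, hT h.2.1, Relation.ReflTransGen.mono (r := stepRel T) (p := stepRel T') (fun a b hab => ⟨hab.1, hT hab.2.1, hT hab.2.2⟩) _ _ h.2.2⟩

lemma chain_mem_of_chain_step {T : Set (Pt d)} :
    ∀ (l : List (Pt d)) (x : Pt d), List.Chain (stepRel T) x l → ∀ z ∈ l, z ∈ T := by
  intro l
  induction l with
  | nil => intro x _ z hz; simp at hz
  | cons a l ih =>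
    intro x hc z hz
    rcases List.chain_cons.1 hc with ⟨hstep, hc'⟩
    rcases List.mem_cons.1 hz with rfl | hz
    · exact hstep.2.2
    · exact ih a hc' z hz

lemma chain_to_rtg {T : Set (Pt d)} :
    ∀ (l : List (Pt d)) (x : Pt d), List.Chain adj x l → (∀ z ∈ x :: l, z ∈ T) →
      Relation.ReflTransGen (stepRel T) x ((x :: l).getLast (List.cons_ne_nil _ _)) := by
  intro l
  induction l with
  | nil => intro x _ _; simpa [List.getLast] using Relation.ReflTransGen.refl
  | cons a l ih =>
    intro x hc hmem
    rcases List.chain_cons.1 hc with ⟨hadj, hc'⟩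
    have hstep : stepRel T x a :=
      ⟨hadj, hmem x (List.mem_cons_self), hmem a (by simp)⟩
    have h2 := ih a hc' (fun z hz => hmem z (List.mem_cons_of_mem _ hz))
    have : (x :: a :: l).getLast (List.cons_ne_nil _ _) = (a :: l).getLast (List.cons_ne_nil _ _) :=
      List.getLast_cons (List.cons_ne_nil _ _)
    rw [this]
    exact Relation.ReflTransGen.head hstep h2

lemma connIn_iff_exists_list (T : Set (Pt d)) (x y : Pt d) :
    connIn T x y ↔ ∃ l : List (Pt d), List.Chain adj x l ∧
      (x :: l).getLast (List.cons_ne_nil _ _) = y ∧ ∀ z ∈ x :: l, z ∈ T := by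
  constructor
  · rintro ⟨hx, hy, h⟩
    obtain ⟨l, hchain, hlast⟩ := List.exists_isChain_cons_of_relationReflTransGen h
    refine ⟨l, hchain.imp fun a b hab => hab.1, hlast, ?_⟩
    intro z hz
    rcases List.mem_cons.1 hz with rfl | hz
    · exact hx
    · exact chain_mem_of_chain_step l x hchain z hz
  · rintro ⟨l, hchain, hlast, hmem⟩
    refine ⟨hmem x (List.mem_cons_self), ?_, ?_⟩
    · exact hlast ▸ hmem _ (List.getLast_mem _)
    · exact hlast ▸ chain_to_rtg l x hchain hmem

lemma ball1_finite (x : Pt d) (M : ℕ) : {y : Pt d | dist1 x y ≤ M}.Finite := by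
  have hsub : {y : Pt d | dist1 x y ≤ M} ⊆
      Set.pi Set.univ (fun i => Set.Icc (x i - M) (x i + M)) := by
    intro y hy i _
    have hi : (x i - y i).natAbs ≤ M := by
      calc (x i - y i).natAbs ≤ dist1 x y := Finset.single_le_sum
            (f := fun i => (x i - y i).natAbs) (fun i _ => Nat.zero_le _) (Finset.mem_univ i)
      _ ≤ M := hy
    simp only [Set.mem_Icc]
    omega
  exact (Set.Finite.pi fun i => Set.finite_Icc _ _).subset hsub

lemma exists_far_of_infinite {C : Set (Pt d)} (hC : C.Infinite) (x : Pt d) (n : ℕ) :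
    ∃ z ∈ C, n ≤ dist1 x z := by
  by_contra h
  push_neg at h
  exact hC ((ball1_finite x n).subset fun z hz => (h z hz).le)

lemma bdd_of_finite {C : Set (Pt d)} (hC : C.Finite) (x : Pt d) :
    ∃ M : ℕ, ∀ y ∈ C, dist1 x y ≤ M := by
  obtain ⟨M, hM⟩ := (hC.image (dist1 x)).bddAbove
  exact ⟨M, fun y hy => hM (Set.mem_image_of_mem _ hy)⟩

lemma Sr_antitone (ω : Config d) {r r' : ℝ} (h : r' ≤ r) : Sr ω r ⊆ Sr ω r' := by
  rintro x ⟨hx, y, hy, z, hz, hd⟩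
  exact ⟨hx, y, hy, z, hz, h.trans hd⟩

lemma mem_SS_of_mem_Sr {ω : Config d} {r : ℝ} {x : Pt d} (h : x ∈ Sr ω r) : x ∈ SS ω := h.1

lemma mem_Sr_of_infinite {ω : Config d} {x : Pt d} (hx : x ∈ SS ω)
    (hinf : (cluster (SS ω) x).Infinite) (r : ℝ) : x ∈ Sr ω r := by
  obtain ⟨z, hz, hzd⟩ := exists_far_of_infinite hinf x ⌈r⌉₊
  refine ⟨hx, x, connIn_refl hx, z, hz, ?_⟩
  calc r ≤ (⌈r⌉₊ : ℝ) := Nat.le_ceil r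
  _ ≤ (dist1 x z : ℝ) := by exact_mod_cast hzd

lemma ballZ_mono (x : Pt d) {R R' : ℕ} (h : R ≤ R') : ballZ x R ⊆ ballZ x R' :=
  fun y hy => le_trans hy h

-- measurability
lemma measurableSet_coord (z : Pt d) : MeasurableSet {ω : Config d | ω z = true} := by
  have : {ω : Config d | ω z = true} = (fun ω : Config d => ω z) ⁻¹' {true} := by
    ext ω; simp
  rw [this]
  exact (measurable_pi_apply z) (by trivial)

lemma measurableSet_connIn (V : Set (Pt d)) (x y : Pt d) :
    MeasurableSet {ω : Config d | connIn (SS ω ∩ V) x y} := by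
  have heq : {ω : Config d | connIn (SS ω ∩ V) x y} =
      ⋃ (l : List (Pt d)) (_ : List.Chain adj x l ∧
        (x :: l).getLast (List.cons_ne_nil _ _) = y ∧ ∀ z ∈ x :: l, z ∈ V),
        {ω : Config d | ∀ z ∈ x :: l, ω z = true} := by
    ext ω
    simp only [Set.mem_setOf_eq, Set.mem_iUnion, connIn_iff_exists_list]
    constructor
    · rintro ⟨l, hc, hl, hm⟩
      exact ⟨l, ⟨hc, hl, fun z hz => (hm z hz).2⟩, fun z hz => (hm z hz).1⟩
    · rintro ⟨l, ⟨hc, hl, hV⟩, hm⟩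
      exact ⟨l, hc, hl, fun z hz => ⟨hm z hz, hV z hz⟩⟩
  rw [heq]
  refine MeasurableSet.iUnion fun l => MeasurableSet.iUnion fun _ => ?_
  have : {ω : Config d | ∀ z ∈ x :: l, ω z = true} =
      ⋂ z ∈ (x :: l : List (Pt d)), {ω : Config d | ω z = true} := by
    ext ω; simp
  rw [this]
  exact MeasurableSet.biInter (Set.Countable.mono (Set.subset_univ _) (Set.countable_univ)) fun z _ => measurableSet_coord z

lemma measurableSet_connIn' (x y : Pt d) :
    MeasurableSet {ω : Config d | connIn (SS ω) x y} := by
  have : {ω : Config d | connIn (SS ω) x y} = {ω : Config d | connIn (SS ω ∩ Set.univ) x y} := by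
    simp
  rw [this]; exact measurableSet_connIn _ x y

lemma measurableSet_memSr (x : Pt d) (r : ℝ) :
    MeasurableSet {ω : Config d | x ∈ Sr ω r} := by
  have heq : {ω : Config d | x ∈ Sr ω r} = {ω : Config d | ω x = true} ∩
      ⋃ (y : Pt d) (z : Pt d) (_ : r ≤ (dist1 y z : ℝ)),
        ({ω : Config d | connIn (SS ω) x y} ∩ {ω : Config d | connIn (SS ω) x z}) := by
    ext ω
    simp only [Sr, cluster, SS, Set.mem_setOf_eq, Set.mem_inter_iff, Set.mem_iUnion]
    constructor
    · rintro ⟨hx, y, hy, z, hz, hd⟩; exact ⟨hx, y, z, hd, hy, hz⟩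
    · rintro ⟨hx, y, z, hd, hy, hz⟩; exact ⟨hx, y, hy, z, hz, hd⟩
  rw [heq]
  exact (measurableSet_coord x).inter <| MeasurableSet.iUnion fun y =>
    MeasurableSet.iUnion fun z => MeasurableSet.iUnion fun _ =>
      (measurableSet_connIn' x y).inter (measurableSet_connIn' x z)

lemma measurableSet_locUniq1 (R : ℕ) : MeasurableSet (locUniq1 d R) := by
  have heq : locUniq1 d R =
      ⋃ (x : Pt d) (_ : x ∈ ballZ (0 : Pt d) R), {ω : Config d | x ∈ Sr ω R} := by
    ext ω
    simp only [locUniq1, Set.mem_setOf_eq, Set.mem_iUnion, Set.Nonempty, Set.mem_inter_iff]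
    tauto
  rw [heq]
  exact MeasurableSet.iUnion fun x => MeasurableSet.iUnion fun _ => measurableSet_memSr x R

lemma measurableSet_locUniq2 (R : ℕ) : MeasurableSet (locUniq2 d R) := by
  have heq : locUniq2 d R =
      ⋂ (x : Pt d) (_ : x ∈ ballZ (0 : Pt d) R) (y : Pt d) (_ : y ∈ ballZ (0 : Pt d) R),
        (({ω : Config d | x ∈ Sr ω ((R : ℝ)/10)} ∩ {ω : Config d | y ∈ Sr ω ((R : ℝ)/10)})ᶜ ∪
          {ω : Config d | connIn (SS ω ∩ ballZ (0 : Pt d) (2*R)) x y}) := by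
    ext ω
    simp only [locUniq2, Set.mem_setOf_eq, Set.mem_iInter, Set.mem_union, Set.mem_compl_iff,
      Set.mem_inter_iff, not_and_or]
    constructor
    · intro h x hx y hy
      by_cases hxs : x ∈ Sr ω ((R : ℝ)/10)
      · by_cases hys : y ∈ Sr ω ((R : ℝ)/10)
        · exact Or.inr (h x ⟨hxs, hx⟩ y ⟨hys, hy⟩)
        · exact Or.inl (Or.inr hys)
      · exact Or.inl (Or.inl hxs)
    · rintro h x ⟨hxs, hx⟩ y ⟨hys, hy⟩
      rcases h x hx y hy with (h' | h') | h'
      · exact absurd hxs h'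
      · exact absurd hys h'
      · exact h'
  rw [heq]
  refine MeasurableSet.iInter fun x => MeasurableSet.iInter fun _ =>
    MeasurableSet.iInter fun y => MeasurableSet.iInter fun _ => MeasurableSet.union ?_ ?_
  · exact ((measurableSet_memSr x _).inter (measurableSet_memSr y _)).compl
  · exact measurableSet_connIn _ x y

lemma main_det (ω : Config d) (k0 : ℕ)
    (h1 : ∀ k, k0 ≤ k → ω ∈ locUniq1 d (2^k))
    (h2 : ∀ k, k0 ≤ k → ω ∈ locUniq2 d (2^(k+1))) :
    ∃ x₀ ∈ Sinf ω, x₀ ∈ ballZ (0 : Pt d) (2^k0) ∧ ∀ w ∈ Sinf ω, connIn (SS ω) w x₀ := by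
  classical
  -- choose the points x_k
  set X : ℕ → Pt d := fun k => if h : k0 ≤ k then (h1 k h).choose else 0 with hXdef
  have hX : ∀ k, (hk : k0 ≤ k) → X k ∈ Sr ω ((2^k : ℕ) : ℝ) ∩ ballZ (0 : Pt d) (2^k) := by
    intro k hk
    simp only [hXdef, dif_pos hk]
    exact (h1 k hk).choose_spec
  -- consecutive connections
  have hstep : ∀ k, k0 ≤ k → connIn (SS ω) (X k) (X (k+1)) := by
    intro k hk
    have hcast : ((2^(k+1) : ℕ) : ℝ) = 2 * ((2^k : ℕ) : ℝ) := by push_cast [pow_succ]; ring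
    have hpos : (0:ℝ) < ((2^k : ℕ) : ℝ) := by positivity
    have hdiv : ((2^(k+1) : ℕ) : ℝ)/10 ≤ ((2^k : ℕ) : ℝ) := by rw [hcast]; linarith
    have hxk : X k ∈ Sr ω (((2^(k+1) : ℕ) : ℝ)/10) ∩ ballZ (0 : Pt d) (2^(k+1)) :=
      ⟨Sr_antitone ω hdiv (hX k hk).1,
        ballZ_mono _ (Nat.pow_le_pow_right (by norm_num) (Nat.le_succ k)) (hX k hk).2⟩
    have hdiv' : ((2^(k+1) : ℕ) : ℝ)/10 ≤ ((2^(k+1) : ℕ) : ℝ) := by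
      have : (0:ℝ) ≤ ((2^(k+1) : ℕ) : ℝ) := by positivity
      linarith
    have hxk1 : X (k+1) ∈ Sr ω (((2^(k+1) : ℕ) : ℝ)/10) ∩ ballZ (0 : Pt d) (2^(k+1)) :=
      ⟨Sr_antitone ω hdiv' (hX (k+1) (hk.trans (Nat.le_succ k))).1,
        (hX (k+1) (hk.trans (Nat.le_succ k))).2⟩
    exact connIn_mono Set.inter_subset_left (h2 k hk _ hxk _ hxk1)
  -- connections from X k0
  have hconn : ∀ k, k0 ≤ k → connIn (SS ω) (X k0) (X k) := by
    intro k hk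
    induction k, hk using Nat.le_induction with
    | base => exact connIn_refl (mem_SS_of_mem_Sr (hX k0 le_rfl).1)
    | succ n hn ih => exact connIn_trans ih (hstep n hn)
  -- the cluster of X k0 is infinite
  have hinf : (cluster (SS ω) (X k0)).Infinite := by
    by_contra hninf
    rw [Set.not_infinite] at hninf
    have hfin := hninf
    obtain ⟨M, hM⟩ := bdd_of_finite hfin (X k0)
    set k := max k0 (2*M) with hkdef
    obtain ⟨hxk, -⟩ := hX k (le_max_left _ _)
    obtain ⟨-, y, hy, z, hz, hd⟩ := hxk
    have hy' : y ∈ cluster (SS ω) (X k0) := connIn_trans (hconn k (le_max_left _ _)) hy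
    have hz' : z ∈ cluster (SS ω) (X k0) := connIn_trans (hconn k (le_max_left _ _)) hz
    have hd' : (2^k : ℕ) ≤ dist1 y z := by exact_mod_cast hd
    have htri : dist1 y z ≤ 2*M := by
      have h1 := hM y hy'
      have h2 := hM z hz'
      have := dist1_triangle y (X k0) z
      rw [dist1_symm y (X k0)] at this
      omega
    have : 2*M < 2^k := lt_of_lt_of_le (Nat.lt_two_pow_self)
      (Nat.pow_le_pow_right (by norm_num) (le_max_right _ _))
    omega
  have hx0 : X k0 ∈ Sinf ω := ⟨mem_SS_of_mem_Sr (hX k0 le_rfl).1, hinf⟩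
  refine ⟨X k0, hx0, (hX k0 le_rfl).2, ?_⟩
  intro w hw
  set k := max k0 (distInf 0 w) with hkdef
  have hwball : w ∈ ballZ (0 : Pt d) (2^(k+1)) := by
    have h1 : distInf 0 w ≤ k := le_max_right _ _
    have h2 : k < 2^(k+1) := lt_of_lt_of_le (Nat.lt_two_pow_self)
      (Nat.pow_le_pow_right (by norm_num) (Nat.le_succ k))
    exact le_trans h1 (le_of_lt h2)
  have hwSr : w ∈ Sr ω (((2^(k+1) : ℕ) : ℝ)/10) := mem_Sr_of_infinite hw.1 hw.2 _
  have hdiv' : ((2^(k+1) : ℕ) : ℝ)/10 ≤ ((2^(k+1) : ℕ) : ℝ) := by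
    have : (0:ℝ) ≤ ((2^(k+1) : ℕ) : ℝ) := by positivity
    linarith
  have hxk1 : X (k+1) ∈ Sr ω (((2^(k+1) : ℕ) : ℝ)/10) ∩ ballZ (0 : Pt d) (2^(k+1)) :=
    ⟨Sr_antitone ω hdiv' (hX (k+1) ((le_max_left _ _).trans (Nat.le_succ k))).1,
      (hX (k+1) ((le_max_left _ _).trans (Nat.le_succ k))).2⟩
  have hc : connIn (SS ω) w (X (k+1)) :=
    connIn_mono Set.inter_subset_left (h2 k (le_max_left _ _) _ ⟨hwSr, hwball⟩ _ hxk1)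
  exact connIn_trans hc (connIn_symm (hconn (k+1) ((le_max_left _ _).trans (Nat.le_succ k))))

lemma rpow_superadd {x y p : ℝ} (hx : 0 ≤ x) (hy : 0 ≤ y) (hp : 1 ≤ p) :
    x^p + y^p ≤ (x+y)^p := by
  lift x to NNReal using hx; lift y to NNReal using hy
  exact_mod_cast NNReal.add_rpow_le_rpow_add x y hp

lemma compl_le {Ω : Type*} [MeasurableSpace Ω] (μ : Measure Ω) [IsProbabilityMeasure μ]
    {G : Set Ω} (hG : MeasurableSet G) {δ : ℝ} (hδ : 0 ≤ δ)
    (h : 1 - δ ≤ (μ G).toReal) : μ Gᶜ ≤ ENNReal.ofReal δ := by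
  rw [prob_compl_eq_one_sub hG]
  have h1 : ENNReal.ofReal (1 - δ) ≤ μ G := ENNReal.ofReal_le_of_le_toReal h
  calc 1 - μ G ≤ 1 - ENNReal.ofReal (1-δ) := tsub_le_tsub_left h1 1
  _ ≤ ENNReal.ofReal δ := by
      rcases le_or_gt δ 1 with hd | hd
      · rw [tsub_le_iff_right, ← ENNReal.ofReal_add hδ (by linarith)]
        have hh : δ + (1-δ) = 1 := by ring
        rw [hh, ENNReal.ofReal_one]
      · have h2 : (1:ℝ≥0∞) ≤ ENNReal.ofReal δ := by
          rw [← ENNReal.ofReal_one]; exact ENNReal.ofReal_le_ofReal hd.le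
        exact le_trans tsub_le_self h2


set_option maxHeartbeats 2000000

/-- Under axiom S1 alone: for every `u ∈ (a,b)`, `P^u`-almost surely the set
`S_∞` is non-empty and connected, and there are `c₁ = c₁(u) > 0`, `C₁ = C₁(u) < ∞` such that for
all `R ≥ 1`, `P^u[S_∞ ∩ B(0,R) ≠ ∅] ≥ 1 − C₁·exp(−c₁·(log R)^{1+Δ_S})`. -/
theorem stmt13 (d : ℕ) (hd : 2 ≤ d) (a b : ℝ) (ha : 0 ≤ a) (hab : a < b)
    (P : ℝ → Measure (Config d))
    (hP : ∀ u ∈ Set.Ioo a b, IsProbabilityMeasure (P u))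
    -- axiom S1:
    (fS : ℝ → ℕ → ℝ) (ΔS : ℝ → ℝ) (RS : ℝ → ℕ)
    (hΔS : ∀ u ∈ Set.Ioo a b, 0 < ΔS u)
    (hfS : ∀ u ∈ Set.Ioo a b, ∀ R : ℕ, RS u ≤ R → (Real.log R) ^ (1 + ΔS u) ≤ fS u R)
    (hS1a : ∀ u ∈ Set.Ioo a b, ∀ R : ℕ, 1 ≤ R →
      1 - Real.exp (-(fS u R)) ≤ (P u (locUniq1 d R)).toReal)
    (hS1b : ∀ u ∈ Set.Ioo a b, ∀ R : ℕ, 1 ≤ R →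
      1 - Real.exp (-(fS u R)) ≤ (P u (locUniq2 d R)).toReal) :
    ∀ u ∈ Set.Ioo a b,
      (∀ᵐ ω ∂(P u), (Sinf ω).Nonempty ∧
        ∀ x ∈ Sinf ω, ∀ y ∈ Sinf ω, connIn (SS ω) x y) ∧
      ∃ c₁ > (0:ℝ), ∃ C₁ : ℝ, 0 < C₁ ∧ ∀ R : ℕ, 1 ≤ R →
        1 - C₁ * Real.exp (-c₁ * (Real.log R) ^ (1 + ΔS u)) ≤
          (P u {ω | (Sinf ω ∩ ballZ (0 : Pt d) R).Nonempty}).toReal := by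
  intro u hu
  haveI := hP u hu
  set β := 1 + ΔS u with hβdef
  have hβ1 : 1 ≤ β := by have := hΔS u hu; simp only [hβdef]; linarith
  have hβ0 : 0 < β := lt_of_lt_of_le one_pos hβ1
  set L := Real.log 2 with hLdef
  have hL : 0 < L := Real.log_pos (by norm_num)
  set q := Real.exp (-(L ^ β)) with hqdef
  have hq0 : 0 < q := Real.exp_pos _
  have hq1 : q < 1 := by
    rw [hqdef, ← Real.exp_zero]
    exact Real.exp_lt_exp.mpr (by simpa using Real.rpow_pos_of_pos hL β)
  have hq1' : 0 < 1 - q := by linarith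
  set e : ℕ → ℝ := fun k => Real.exp (-((k:ℝ)*L)^β) with hedef
  have hepos : ∀ k, 0 < e k := fun k => Real.exp_pos _
  set kstar := RS u + 1 with hkstardef
  have hkstar1 : 1 ≤ kstar := Nat.le_add_left 1 (RS u)
  have hkstar_R : ∀ k, kstar ≤ k → RS u ≤ 2^k := by
    intro k hk
    calc RS u ≤ kstar := Nat.le_succ _
    _ ≤ 2^kstar := Nat.le_of_lt (Nat.lt_two_pow_self)
    _ ≤ 2^k := Nat.pow_le_pow_right (by norm_num) hk
  have hcastlog : ∀ k : ℕ, Real.log ((2^k : ℕ) : ℝ) = (k:ℝ) * L := by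
    intro k
    rw [Nat.cast_pow, Nat.cast_ofNat, Real.log_pow]
  -- exp(-fS(2^k)) ≤ e k for k ≥ kstar
  have hfe : ∀ k k', kstar ≤ k → k ≤ k' → Real.exp (-(fS u (2^k'))) ≤ e k := by
    intro k k' hk hkk'
    have h1 : ((k:ℝ)*L)^β ≤ ((k':ℝ)*L)^β := by
      apply Real.rpow_le_rpow (by positivity) _ hβ0.le
      have : (k:ℝ) ≤ (k':ℝ) := by exact_mod_cast hkk'
      nlinarith
    have h2 : ((k':ℝ)*L)^β ≤ fS u (2^k') := by
      have := hfS u hu (2^k') (hkstar_R k' (hk.trans hkk'))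
      rwa [hcastlog k'] at this
    exact Real.exp_le_exp.mpr (by simp only [neg_le_neg_iff]; linarith)
  -- complements of the basic events
  have hG1 : ∀ k, kstar ≤ k → P u (locUniq1 d (2^k))ᶜ ≤ ENNReal.ofReal (e k) := by
    intro k hk
    refine compl_le (P u) (measurableSet_locUniq1 _) (hepos k).le ?_
    have := hS1a u hu (2^k) Nat.one_le_two_pow
    have h2 := hfe k k hk le_rfl
    linarith
  have hG2 : ∀ k, kstar ≤ k → P u (locUniq2 d (2^(k+1)))ᶜ ≤ ENNReal.ofReal (e k) := by
    intro k hk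
    refine compl_le (P u) (measurableSet_locUniq2 _) (hepos k).le ?_
    have := hS1b u hu (2^(k+1)) Nat.one_le_two_pow
    have h2 := hfe k (k+1) hk (Nat.le_succ k)
    linarith
  set Gset : ℕ → Set (Config d) := fun k => locUniq1 d (2^k) ∩ locUniq2 d (2^(k+1))
    with hGdef
  set Bad : ℕ → Set (Config d) := fun k0 => ⋃ m : ℕ, (Gset (k0 + m))ᶜ with hBaddef
  have hBadmeas : ∀ k0, MeasurableSet (Bad k0) := by
    intro k0
    exact MeasurableSet.iUnion fun m =>
      ((measurableSet_locUniq1 _).inter (measurableSet_locUniq2 _)).compl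
  have hGcompl : ∀ k, kstar ≤ k → P u (Gset k)ᶜ ≤ ENNReal.ofReal (2 * e k) := by
    intro k hk
    have : (Gset k)ᶜ = (locUniq1 d (2^k))ᶜ ∪ (locUniq2 d (2^(k+1)))ᶜ := by
      simp [hGdef, Set.compl_inter]
    rw [this]
    calc P u ((locUniq1 d (2^k))ᶜ ∪ (locUniq2 d (2^(k+1)))ᶜ)
        ≤ P u (locUniq1 d (2^k))ᶜ + P u (locUniq2 d (2^(k+1)))ᶜ := measure_union_le _ _
    _ ≤ ENNReal.ofReal (e k) + ENNReal.ofReal (e k) := add_le_add (hG1 k hk) (hG2 k hk)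
    _ = ENNReal.ofReal (2 * e k) := by
        rw [← ENNReal.ofReal_add (hepos k).le (hepos k).le]; ring_nf
  -- geometric bound
  have he_geo : ∀ k0 m : ℕ, e (k0 + m) ≤ e k0 * q ^ m := by
    intro k0 m
    have hkey : ((k0:ℝ)*L)^β + (m:ℝ)*L^β ≤ (((k0+m : ℕ):ℝ)*L)^β := by
      have h1 : ((k0:ℝ)*L)^β + ((m:ℝ)*L)^β ≤ (((k0:ℝ)*L) + ((m:ℝ)*L))^β :=
        rpow_superadd (by positivity) (by positivity) hβ1
      have h2 : (m:ℝ)*L^β ≤ ((m:ℝ)*L)^β := by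
        rw [Real.mul_rpow (by positivity) hL.le]
        have hm : (m:ℝ) ≤ (m:ℝ)^β := by
          rcases Nat.eq_zero_or_pos m with rfl | hm
          · simp [Real.zero_rpow (by linarith : β ≠ 0)]
          · have hm1 : (1:ℝ) ≤ (m:ℝ) := by exact_mod_cast hm
            calc (m:ℝ) = (m:ℝ)^(1:ℝ) := (Real.rpow_one _).symm
            _ ≤ (m:ℝ)^β := Real.rpow_le_rpow_of_exponent_le hm1 hβ1
        exact mul_le_mul_of_nonneg_right hm (Real.rpow_nonneg hL.le β)
      have h3 : (((k0+m : ℕ):ℝ)*L) = ((k0:ℝ)*L) + ((m:ℝ)*L) := by push_cast; ring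
      rw [h3]
      linarith
    calc e (k0 + m) = Real.exp (-(((k0+m : ℕ):ℝ)*L)^β) := rfl
    _ ≤ Real.exp (-(((k0:ℝ)*L)^β + (m:ℝ)*L^β)) := Real.exp_le_exp.mpr (by linarith)
    _ = e k0 * q ^ m := by
        rw [hedef]
        simp only []
        rw [neg_add, Real.exp_add]
        congr 1
        rw [hqdef, ← Real.exp_nat_mul]
        congr 1
        ring
  have heps_nonneg : ∀ k0, 0 ≤ 2 * e k0 * (1-q)⁻¹ := fun k0 => by positivity
  have hBad : ∀ k0, kstar ≤ k0 → P u (Bad k0) ≤ ENNReal.ofReal (2 * e k0 * (1-q)⁻¹) := by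
    intro k0 hk0
    have hsummable : Summable (fun m : ℕ => 2 * e k0 * q ^ m) :=
      (summable_geometric_of_lt_one hq0.le hq1).mul_left _
    calc P u (Bad k0) ≤ ∑' m : ℕ, P u (Gset (k0 + m))ᶜ := measure_iUnion_le _
    _ ≤ ∑' m : ℕ, ENNReal.ofReal (2 * e k0 * q ^ m) := by
        refine ENNReal.tsum_le_tsum fun m => le_trans (hGcompl _ (hk0.trans (Nat.le_add_right _ _))) ?_
        refine ENNReal.ofReal_le_ofReal ?_
        have := he_geo k0 m
        nlinarith
    _ = ENNReal.ofReal (∑' m : ℕ, 2 * e k0 * q ^ m) :=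
        (ENNReal.ofReal_tsum_of_nonneg (fun m => by positivity) hsummable).symm
    _ = ENNReal.ofReal (2 * e k0 * (1-q)⁻¹) := by
        rw [tsum_mul_left, tsum_geometric_of_lt_one hq0.le hq1]
  -- good configurations
  have hgood : ∀ k0 (ω : Config d), ω ∉ Bad k0 →
      ∃ x₀ ∈ Sinf ω, x₀ ∈ ballZ (0 : Pt d) (2^k0) ∧ ∀ w ∈ Sinf ω, connIn (SS ω) w x₀ := by
    intro k0 ω hω
    simp only [hBaddef, Set.mem_iUnion, not_exists, Set.notMem_compl_iff] at hω
    have h1 : ∀ k, k0 ≤ k → ω ∈ locUniq1 d (2^k) := by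
      intro k hk
      obtain ⟨m, rfl⟩ := Nat.exists_eq_add_of_le hk
      exact (hω m).1
    have h2 : ∀ k, k0 ≤ k → ω ∈ locUniq2 d (2^(k+1)) := by
      intro k hk
      obtain ⟨m, rfl⟩ := Nat.exists_eq_add_of_le hk
      exact (hω m).2
    exact main_det ω k0 h1 h2
  constructor
  · -- a.s. statement
    rw [ae_iff]
    have hsub : ∀ n : ℕ, {ω : Config d | ¬((Sinf ω).Nonempty ∧
        ∀ x ∈ Sinf ω, ∀ y ∈ Sinf ω, connIn (SS ω) x y)} ⊆ Bad (kstar + n) := by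
      intro n ω hω
      by_contra hB
      obtain ⟨x₀, hx₀, -, hconn⟩ := hgood _ ω hB
      exact hω ⟨⟨x₀, hx₀⟩, fun x hx y hy =>
        connIn_trans (hconn x hx) (connIn_symm (hconn y hy))⟩
    have hb : ∀ n : ℕ, P u {ω : Config d | ¬((Sinf ω).Nonempty ∧
        ∀ x ∈ Sinf ω, ∀ y ∈ Sinf ω, connIn (SS ω) x y)} ≤
        ENNReal.ofReal (2 * e (kstar + n) * (1-q)⁻¹) := fun n =>
      le_trans (measure_mono (hsub n)) (hBad _ (Nat.le_add_right _ _))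
    have htendR : Tendsto (fun n : ℕ => 2 * e (kstar + n) * (1-q)⁻¹) atTop (nhds 0) := by
      apply squeeze_zero (fun n => by positivity)
        (g := fun n : ℕ => (2 * e kstar * (1-q)⁻¹) * q ^ n)
      · intro n
        have := he_geo kstar n
        have h3 : 0 ≤ (1-q)⁻¹ := by positivity
        nlinarith
      · have := (tendsto_pow_atTop_nhds_zero_of_lt_one hq0.le hq1).const_mul
          (2 * e kstar * (1-q)⁻¹)
        simpa using this
    have htend : Tendsto (fun n : ℕ => ENNReal.ofReal (2 * e (kstar + n) * (1-q)⁻¹))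
        atTop (nhds 0) := by
      have := ENNReal.tendsto_ofReal htendR
      simpa using this
    exact le_zero_iff.mp (ge_of_tendsto' htend hb)
  · -- quantitative statement
    set c₁ := (2:ℝ) ^ (-β) with hc₁def
    have hc₁ : 0 < c₁ := Real.rpow_pos_of_pos two_pos _
    set C₁ := 2*(1-q)⁻¹ + Real.exp (c₁ * (((kstar:ℝ))*L)^β) with hC₁def
    have hC₁pos : 0 < C₁ := by positivity
    refine ⟨c₁, hc₁, C₁, hC₁pos, ?_⟩
    intro R hR
    have hRpos : (0:ℝ) < (R:ℝ) := by exact_mod_cast hR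
    have hlogR : 0 ≤ Real.log R := Real.log_nonneg (by exact_mod_cast hR)
    rcases lt_or_ge R (2^kstar) with hsmall | hbig
    · -- small R : right-hand side is ≤ 0
      have hX : (Real.log R)^β ≤ (((kstar:ℝ))*L)^β := by
        apply Real.rpow_le_rpow hlogR _ hβ0.le
        have h1 : (R:ℝ) ≤ ((2^kstar : ℕ):ℝ) := by exact_mod_cast hsmall.le
        calc Real.log R ≤ Real.log ((2^kstar : ℕ):ℝ) := Real.log_le_log hRpos h1
        _ = (kstar:ℝ)*L := hcastlog kstar
      have h1le : 1 ≤ C₁ * Real.exp (-c₁ * (Real.log R)^β) := by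
        have hstep : Real.exp (c₁ * (((kstar:ℝ))*L)^β) * Real.exp (-c₁ * (Real.log R)^β)
            = Real.exp (c₁ * (((kstar:ℝ))*L)^β - c₁ * (Real.log R)^β) := by
          rw [← Real.exp_add]; ring_nf
        have h2 : (1:ℝ) ≤ Real.exp (c₁ * (((kstar:ℝ))*L)^β - c₁ * (Real.log R)^β) := by
          rw [← Real.exp_zero]
          apply Real.exp_le_exp.mpr
          nlinarith
        have h3 : 0 < Real.exp (-c₁ * (Real.log R)^β) := Real.exp_pos _
        have h4 : 0 < 2*(1-q)⁻¹ := by positivity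
        have h5 : C₁ * Real.exp (-c₁ * (Real.log R)^β) =
            2*(1-q)⁻¹ * Real.exp (-c₁ * (Real.log R)^β) +
            Real.exp (c₁ * (((kstar:ℝ))*L)^β) * Real.exp (-c₁ * (Real.log R)^β) := by
          rw [hC₁def]; ring
        rw [h5, hstep]
        nlinarith [mul_pos h4 h3]
      have h0 : 0 ≤ (P u {ω | (Sinf ω ∩ ballZ (0 : Pt d) R).Nonempty}).toReal :=
        ENNReal.toReal_nonneg
      linarith
    · -- large R
      have hR0 : R ≠ 0 := by omega
      obtain ⟨k0, h2k0, hk0R, hkk, hk01⟩ :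
          ∃ k0 : ℕ, 2^k0 ≤ R ∧ R < 2^(k0+1) ∧ kstar ≤ k0 ∧ 1 ≤ k0 := by
        refine ⟨Nat.log 2 R, Nat.pow_log_le_self 2 hR0,
          Nat.lt_pow_succ_log_self (by norm_num) R,
          (Nat.le_log_iff_pow_le (by norm_num) hR0).2 hbig, ?_⟩
        exact hkstar1.trans ((Nat.le_log_iff_pow_le (by norm_num) hR0).2 hbig)
      have hsub : (Bad k0)ᶜ ⊆ {ω : Config d | (Sinf ω ∩ ballZ (0 : Pt d) R).Nonempty} := by
        intro ω hω
        obtain ⟨x₀, hx₀, hball, -⟩ := hgood k0 ω hω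
        exact ⟨x₀, hx₀, ballZ_mono _ h2k0 hball⟩
      have hfin1 : P u {ω : Config d | (Sinf ω ∩ ballZ (0 : Pt d) R).Nonempty} ≠ ⊤ :=
        measure_ne_top _ _
      have hge : (P u ((Bad k0)ᶜ)).toReal ≤
          (P u {ω : Config d | (Sinf ω ∩ ballZ (0 : Pt d) R).Nonempty}).toReal :=
        ENNReal.toReal_mono hfin1 (measure_mono hsub)
      have hcompl : (P u ((Bad k0)ᶜ)).toReal = 1 - (P u (Bad k0)).toReal := by
        rw [prob_compl_eq_one_sub (hBadmeas k0),
          ENNReal.toReal_sub_of_le prob_le_one ENNReal.one_ne_top, ENNReal.toReal_one]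
      have hBadR : (P u (Bad k0)).toReal ≤ 2 * e k0 * (1-q)⁻¹ := by
        have := ENNReal.toReal_mono ENNReal.ofReal_ne_top (hBad k0 hkk)
        rwa [ENNReal.toReal_ofReal (heps_nonneg k0)] at this
      -- the analytic comparison
      have hcomp : 2 * e k0 * (1-q)⁻¹ ≤ C₁ * Real.exp (-c₁ * (Real.log R)^β) := by
        have hek : e k0 ≤ Real.exp (-c₁ * (Real.log R)^β) := by
          apply Real.exp_le_exp.mpr
          have hlog2 : Real.log R ≤ 2*((k0:ℝ)*L) := by
            have h1 : (R:ℝ) ≤ ((2^(k0+1) : ℕ):ℝ) := by exact_mod_cast hk0R.le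
            have h2 : Real.log R ≤ ((k0:ℝ)+1)*L := by
              calc Real.log R ≤ Real.log ((2^(k0+1) : ℕ):ℝ) := Real.log_le_log hRpos h1
              _ = ((k0+1 : ℕ):ℝ)*L := hcastlog (k0+1)
              _ = ((k0:ℝ)+1)*L := by push_cast; ring
            have h3 : (1:ℝ) ≤ (k0:ℝ) := by exact_mod_cast hk01
            nlinarith
          have h4 : (Real.log R)^β ≤ (2*((k0:ℝ)*L))^β :=
            Real.rpow_le_rpow hlogR hlog2 hβ0.le
          have h5 : (2*((k0:ℝ)*L))^β = 2^β * ((k0:ℝ)*L)^β :=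
            Real.mul_rpow (by norm_num) (by positivity)
          have h6 : c₁ * (2:ℝ)^β = 1 := by
            rw [hc₁def, ← Real.rpow_add two_pos]
            simp
          have h7 : c₁ * (Real.log R)^β ≤ ((k0:ℝ)*L)^β := by
            calc c₁ * (Real.log R)^β ≤ c₁ * (2^β * ((k0:ℝ)*L)^β) := by
                  apply mul_le_mul_of_nonneg_left _ hc₁.le
                  rw [← h5]; exact h4
            _ = (c₁ * 2^β) * ((k0:ℝ)*L)^β := by ring
            _ = ((k0:ℝ)*L)^β := by rw [h6, one_mul]
          linarith
        have h8 : 0 < Real.exp (-c₁ * (Real.log R)^β) := Real.exp_pos _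
        have h9 : 0 < (1-q)⁻¹ := by positivity
        have h10 : 0 < Real.exp (c₁ * (((kstar:ℝ))*L)^β) := Real.exp_pos _
        calc 2 * e k0 * (1-q)⁻¹ ≤ 2 * Real.exp (-c₁ * (Real.log R)^β) * (1-q)⁻¹ := by
              nlinarith
        _ = (2*(1-q)⁻¹) * Real.exp (-c₁ * (Real.log R)^β) := by ring
        _ ≤ C₁ * Real.exp (-c₁ * (Real.log R)^β) := by
              apply mul_le_mul_of_nonneg_right _ h8.le
              rw [hC₁def]; linarith
      calc 1 - C₁ * Real.exp (-c₁ * Real.log (R:ℝ) ^ β)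
          ≤ 1 - (2 * e k0 * (1-q)⁻¹) := by linarith
      _ ≤ 1 - ((P u) (Bad k0)).toReal := by linarith
      _ = ((P u) ((Bad k0)ᶜ)).toReal := hcompl.symm
      _ ≤ _ := hge


end Perco
end
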